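/- arXiv:1404.6808 — 3 statements merged into one kernel-verified Lean document; each statement's English description precedes it below -/
import Mathlib

section
/- Let a, b, c ∈ ℝ² be affinely independent points such that the triangle T := conv{a, b, c} has no obtuse angle, i.e. ⟨b − a, c − a⟩ ≥ 0, ⟨a − b, c − b⟩ ≥ 0 and ⟨a − c, b − c⟩ ≥ 0. Write r = r(T), w = w(T), D = D(T), R = R(T). Then w·D = 2·r·( D + (2·r·R/D)·( 1 + √(1 − (D/(2R))²) ) ), i.e. every acute (non-obtuse) triangle satisfies the inequality w ≤ 2r(1 + (2rR/D²)(1 + √(1 − (D/2R)²))) with equality. -/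
open Metric Set
open scoped RealInnerProductSpace

/-- The diameter of a set. -/
noncomputable def sDiam {n : ℕ} (K : Set (EuclideanSpace ℝ (Fin n))) : ℝ :=
  Metric.diam K

/-- The circumradius: radius of the smallest enclosing closed ball. -/
noncomputable def circumradius {n : ℕ} (K : Set (EuclideanSpace ℝ (Fin n))) : ℝ :=
  sInf {ρ : ℝ | 0 ≤ ρ ∧ ∃ c, K ⊆ Metric.closedBall c ρ}

/-- The inradius: radius of a largest inscribed closed ball. -/
noncomputable def inradius {n : ℕ} (K : Set (EuclideanSpace ℝ (Fin n))) : ℝ :=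
  sSup {ρ : ℝ | 0 ≤ ρ ∧ ∃ c, Metric.closedBall c ρ ⊆ K}

/-- The (minimal) width: the smallest breadth over all directions. -/
noncomputable def width {n : ℕ} (K : Set (EuclideanSpace ℝ (Fin n))) : ℝ :=
  sInf {b : ℝ | ∃ u : EuclideanSpace ℝ (Fin n), ‖u‖ = 1 ∧
    b = sSup ((fun x => (inner ℝ u x : ℝ)) '' K) - sInf ((fun x => (inner ℝ u x : ℝ)) '' K)}

namespace AT
abbrev E := EuclideanSpace ℝ (Fin 2)

def det2 (x y : E) : ℝ := x 0 * y 1 - x 1 * y 0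

lemma inner2 (x y : E) : (⟪x, y⟫ : ℝ) = x 0 * y 0 + x 1 * y 1 := by
  simp [PiLp.inner_apply, RCLike.inner_apply, Fin.sum_univ_two]; ring

lemma normsq (x : E) : ‖x‖ ^ 2 = x 0 ^ 2 + x 1 ^ 2 := by
  rw [← real_inner_self_eq_norm_sq, inner2]; ring

lemma sub_apply (x y : E) (i : Fin 2) : (x - y) i = x i - y i := by simp


lemma det2_sq_le (x y : E) : det2 x y ^ 2 ≤ (‖x‖ * ‖y‖) ^ 2 := by
  have hx := normsq x; have hy := normsq y
  have : (‖x‖ * ‖y‖) ^ 2 = (x 0 ^2 + x 1 ^2) * (y 0 ^2 + y 1 ^2) := by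
    rw [mul_pow, hx, hy]
  rw [this, det2]
  nlinarith [sq_nonneg (x 0 * y 0 + x 1 * y 1)]
lemma abs_det2_le (x y : E) : |det2 x y| ≤ ‖x‖ * ‖y‖ := by
  have h := det2_sq_le x y
  have h2 : 0 ≤ ‖x‖ * ‖y‖ := mul_nonneg (norm_nonneg x) (norm_nonneg y)
  nlinarith [abs_nonneg (det2 x y), sq_abs (det2 x y)]

lemma isLinear_inner (u : E) : IsLinearMap ℝ (fun x : E => (⟪u, x⟫ : ℝ)) :=
  ⟨fun x y => inner_add_right u x y, fun r x => real_inner_smul_right u x r⟩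

lemma sSup_proj (u a b c : E) :
    sSup ((fun x : E => (⟪u, x⟫ : ℝ)) '' convexHull ℝ ({a, b, c} : Set E)) =
      max (max (⟪u, a⟫ : ℝ) (⟪u, b⟫ : ℝ)) (⟪u, c⟫ : ℝ) := by
  set m := max (max (⟪u, a⟫ : ℝ) (⟪u, b⟫ : ℝ)) (⟪u, c⟫ : ℝ) with hm
  have hsub : convexHull ℝ ({a, b, c} : Set E) ⊆ {x : E | (⟪u, x⟫ : ℝ) ≤ m} := by
    apply convexHull_min
    · rintro x (rfl | rfl | rfl)
      · show (⟪u, x⟫ : ℝ) ≤ m; exact le_max_of_le_left (le_max_left _ _)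
      · show (⟪u, x⟫ : ℝ) ≤ m; exact le_max_of_le_left (le_max_right _ _)
      · show (⟪u, x⟫ : ℝ) ≤ m; exact le_max_right _ _
    · exact convex_halfSpace_le (isLinear_inner u) m
  have hub : ∀ y ∈ (fun x : E => (⟪u, x⟫ : ℝ)) '' convexHull ℝ ({a, b, c} : Set E), y ≤ m := by
    rintro y ⟨x, hx, rfl⟩; exact hsub hx
  have hbdd : BddAbove ((fun x : E => (⟪u, x⟫ : ℝ)) '' convexHull ℝ ({a, b, c} : Set E)) := ⟨m, hub⟩
  have hmem : ∀ x ∈ ({a, b, c} : Set E), (⟪u, x⟫ : ℝ) ≤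
      sSup ((fun x : E => (⟪u, x⟫ : ℝ)) '' convexHull ℝ ({a, b, c} : Set E)) := by
    intro x hx
    exact le_csSup hbdd ⟨x, subset_convexHull ℝ _ hx, rfl⟩
  apply le_antisymm
  · exact csSup_le ⟨(⟪u, a⟫ : ℝ), ⟨a, subset_convexHull ℝ _ (by simp), rfl⟩⟩ hub
  · exact max_le (max_le (hmem a (by simp)) (hmem b (by simp))) (hmem c (by simp))

lemma sInf_proj (u a b c : E) :
    sInf ((fun x : E => (⟪u, x⟫ : ℝ)) '' convexHull ℝ ({a, b, c} : Set E)) =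
      min (min (⟪u, a⟫ : ℝ) (⟪u, b⟫ : ℝ)) (⟪u, c⟫ : ℝ) := by
  set m := min (min (⟪u, a⟫ : ℝ) (⟪u, b⟫ : ℝ)) (⟪u, c⟫ : ℝ) with hm
  have hsub : convexHull ℝ ({a, b, c} : Set E) ⊆ {x : E | m ≤ (⟪u, x⟫ : ℝ)} := by
    apply convexHull_min
    · rintro x (rfl | rfl | rfl)
      · show m ≤ (⟪u, x⟫ : ℝ); exact min_le_of_left_le (min_le_left _ _)
      · show m ≤ (⟪u, x⟫ : ℝ); exact min_le_of_left_le (min_le_right _ _)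
      · show m ≤ (⟪u, x⟫ : ℝ); exact min_le_right _ _
    · exact convex_halfSpace_ge (isLinear_inner u) m
  have hub : ∀ y ∈ (fun x : E => (⟪u, x⟫ : ℝ)) '' convexHull ℝ ({a, b, c} : Set E), m ≤ y := by
    rintro y ⟨x, hx, rfl⟩; exact hsub hx
  have hbdd : BddBelow ((fun x : E => (⟪u, x⟫ : ℝ)) '' convexHull ℝ ({a, b, c} : Set E)) := ⟨m, hub⟩
  have hmem : ∀ x ∈ ({a, b, c} : Set E),
      sInf ((fun x : E => (⟪u, x⟫ : ℝ)) '' convexHull ℝ ({a, b, c} : Set E)) ≤ (⟪u, x⟫ : ℝ) := by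
    intro x hx
    exact csInf_le hbdd ⟨x, subset_convexHull ℝ _ hx, rfl⟩
  apply le_antisymm
  · exact le_min (le_min (hmem a (by simp)) (hmem b (by simp))) (hmem c (by simp))
  · exact le_csInf ⟨(⟪u, a⟫ : ℝ), ⟨a, subset_convexHull ℝ _ (by simp), rfl⟩⟩ hub

lemma breadth_lb (u x y z : E) (hu : ‖u‖ = 1) (D : ℝ)
    (h1 : dist y x ≤ D) (h2 : dist y z ≤ D)
    (hxy : (⟪u, x⟫ : ℝ) ≤ ⟪u, y⟫) (hyz : (⟪u, y⟫ : ℝ) ≤ ⟪u, z⟫) :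
    |det2 (z - x) (y - x)| ≤ ((⟪u, z⟫ : ℝ) - ⟪u, x⟫) * D := by
  have hu2 : u 0 ^ 2 + u 1 ^ 2 = 1 := by rw [← normsq, hu]; norm_num
  have hD0 : 0 ≤ D := le_trans dist_nonneg h1
  set g : ℝ := ⟪u, z⟫ - ⟪u, x⟫ with hgdef
  have hg0 : 0 ≤ g := by linarith
  set β : ℝ := ⟪u, y⟫ - ⟪u, x⟫ with hβdef
  have hβ0 : 0 ≤ β := by linarith
  have hβg : β ≤ g := by linarith
  -- inner products in coordinates
  have hginner : g = u 0 * (z - x) 0 + u 1 * (z - x) 1 := by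
    rw [hgdef, inner2, inner2, sub_apply, sub_apply]; ring
  have hβinner : β = u 0 * (y - x) 0 + u 1 * (y - x) 1 := by
    rw [hβdef, inner2, inner2, sub_apply, sub_apply]; ring
  rcases eq_or_lt_of_le hg0 with hg | hg
  · -- g = 0, hence β = 0, hence det = 0
    have hβz : β = 0 := le_antisymm (by linarith [hβg, hg]) hβ0
    have : det2 (z - x) (y - x) = 0 := by
      have e1 : u 0 * (z - x) 0 + u 1 * (z - x) 1 = 0 := by rw [← hginner, ← hg]
      have e2 : u 0 * (y - x) 0 + u 1 * (y - x) 1 = 0 := by rw [← hβinner, hβz]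
      have key : (u 0 ^ 2 + u 1 ^ 2) * det2 (z - x) (y - x) =
          (u 0 * (z - x) 0 + u 1 * (z - x) 1) * (u 0 * (y - x) 1 - u 1 * (y - x) 0)
          - (u 0 * (z - x) 1 - u 1 * (z - x) 0) * (u 0 * (y - x) 0 + u 1 * (y - x) 1) := by
        rw [det2]; ring
      rw [hu2, one_mul] at key
      rw [key, e1, e2]; ring
    rw [this, abs_zero]; positivity
  · -- main case: g > 0
    set t : ℝ := β / g with htdef
    have ht0 : 0 ≤ t := div_nonneg hβ0 (le_of_lt hg)
    have ht1 : t ≤ 1 := (div_le_one hg).2 hβg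
    set q : E := (y - x) - t • (z - x) with hqdef
    have hq0 : q 0 = (y - x) 0 - t * (z - x) 0 := by simp [hqdef]
    have hq1 : q 1 = (y - x) 1 - t * (z - x) 1 := by simp [hqdef]
    have hqinner : u 0 * q 0 + u 1 * q 1 = 0 := by
      rw [hq0, hq1]
      have : β = t * g := by rw [htdef]; field_simp
      rw [hβinner, hginner] at this
      linarith [this]
    -- det decomposition
    have hdet : det2 (z - x) (y - x) = g * (u 0 * q 1 - u 1 * q 0) := by
      have key : (u 0 ^ 2 + u 1 ^ 2) * det2 (z - x) q =
          (u 0 * (z - x) 0 + u 1 * (z - x) 1) * (u 0 * q 1 - u 1 * q 0)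
          - (u 0 * (z - x) 1 - u 1 * (z - x) 0) * (u 0 * q 0 + u 1 * q 1) := by
        rw [det2]; ring
      rw [hu2, one_mul, hqinner, mul_zero, sub_zero, ← hginner] at key
      rw [← key, det2, det2, hq0, hq1]; ring
    -- |u0 q1 - u1 q0| ≤ ‖q‖
    have habs : (u 0 * q 1 - u 1 * q 0) ^ 2 ≤ ‖q‖ ^ 2 := by
      rw [normsq]
      nlinarith [sq_nonneg (u 0 * q 0 + u 1 * q 1), hu2]
    -- ‖q‖ ≤ D
    have hqD : ‖q‖ ≤ D := by
      have hqeq : q = (1 - t) • (y - x) + t • (y - z) := by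
        rw [hqdef]; ext i; simp; ring
      calc ‖q‖ ≤ ‖(1 - t) • (y - x)‖ + ‖t • (y - z)‖ := by rw [hqeq]; exact norm_add_le _ _
        _ = (1 - t) * ‖y - x‖ + t * ‖y - z‖ := by
            rw [norm_smul, norm_smul, Real.norm_eq_abs, Real.norm_eq_abs,
              abs_of_nonneg (by linarith : (0:ℝ) ≤ 1 - t), abs_of_nonneg ht0]
        _ ≤ (1 - t) * D + t * D := by
            have e1 : ‖y - x‖ = dist y x := (dist_eq_norm y x).symm
            have e2 : ‖y - z‖ = dist y z := (dist_eq_norm y z).symm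
            rw [e1, e2]
            have := mul_le_mul_of_nonneg_left h1 (by linarith : (0:ℝ) ≤ 1 - t)
            have := mul_le_mul_of_nonneg_left h2 ht0
            linarith
        _ = D := by ring
    rw [hdet, abs_mul, abs_of_pos hg]
    apply mul_le_mul_of_nonneg_left _ hg0
    have h1' : |u 0 * q 1 - u 1 * q 0| ≤ ‖q‖ := by
      have hq : 0 ≤ ‖q‖ := norm_nonneg q
      nlinarith [sq_abs (u 0 * q 1 - u 1 * q 0), abs_nonneg (u 0 * q 1 - u 1 * q 0)]
    linarith
lemma width_eq (a b c : E) (hd : 0 < det2 (b - a) (c - a))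
    (hab : dist a c ≤ dist a b) (hbc : dist b c ≤ dist a b) :
    width (convexHull ℝ ({a, b, c} : Set E)) = det2 (b - a) (c - a) / dist a b := by
  have hab_ne : a ≠ b := by
    intro h
    have : det2 (b - a) (c - a) = 0 := by rw [h]; simp [det2]
    rw [this] at hd; exact lt_irrefl 0 hd
  have hD0 : 0 < dist a b := dist_pos.2 hab_ne
  set D : ℝ := dist a b with hDdef
  set Δ : ℝ := det2 (b - a) (c - a) with hΔdef
  -- pairwise distance bounds
  have dba : dist b a ≤ D := by rw [dist_comm]
  have dca : dist c a ≤ D := by rw [dist_comm]; exact hab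
  have dcb : dist c b ≤ D := by rw [dist_comm]; exact hbc
  have dab' : dist a b ≤ D := le_refl D
  have dac : dist a c ≤ D := hab
  have dbc : dist b c ≤ D := hbc
  -- the lower bound for every element of the width set
  have hlb : ∀ w ∈ {w : ℝ | ∃ u : E, ‖u‖ = 1 ∧
      w = sSup ((fun x => (inner ℝ u x : ℝ)) '' convexHull ℝ ({a, b, c} : Set E))
        - sInf ((fun x => (inner ℝ u x : ℝ)) '' convexHull ℝ ({a, b, c} : Set E))},
      Δ / D ≤ w := by
    rintro w ⟨u, hu, rfl⟩
    rw [sSup_proj, sInf_proj]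
    set pa : ℝ := ⟪u, a⟫
    set pb : ℝ := ⟪u, b⟫
    set pc : ℝ := ⟪u, c⟫
    set M : ℝ := max (max pa pb) pc with hM
    set m : ℝ := min (min pa pb) pc with hm
    have hMa : pa ≤ M := le_max_of_le_left (le_max_left _ _)
    have hMb : pb ≤ M := le_max_of_le_left (le_max_right _ _)
    have hMc : pc ≤ M := le_max_right _ _
    have hma : m ≤ pa := min_le_of_left_le (min_le_left _ _)
    have hmb : m ≤ pb := min_le_of_left_le (min_le_right _ _)
    have hmc : m ≤ pc := min_le_right _ _
    have key : Δ ≤ (M - m) * D := by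
      rcases le_total pa pb with h1 | h1
      · rcases le_total pb pc with h2 | h2
        · -- pa ≤ pb ≤ pc, middle b
          have hk := breadth_lb u a b c hu D dba dbc h1 h2
          have he : det2 (c - a) (b - a) = -Δ := by rw [hΔdef, det2, det2]; simp; ring
          rw [he, abs_neg, abs_of_pos hd] at hk
          calc Δ ≤ (pc - pa) * D := hk
            _ ≤ (M - m) * D := by
              apply mul_le_mul_of_nonneg_right _ (le_of_lt hD0); linarith
        · rcases le_total pa pc with h3 | h3
          · -- pa ≤ pc ≤ pb, middle c
            have hk := breadth_lb u a c b hu D dca dcb h3 h2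
            have he : det2 (b - a) (c - a) = Δ := rfl
            rw [he, abs_of_pos hd] at hk
            calc Δ ≤ (pb - pa) * D := hk
              _ ≤ (M - m) * D := by
                apply mul_le_mul_of_nonneg_right _ (le_of_lt hD0); linarith
          · -- pc ≤ pa ≤ pb, middle a
            have hk := breadth_lb u c a b hu D dac dab' h3 h1
            have he : det2 (b - c) (a - c) = -Δ := by rw [hΔdef, det2, det2]; simp; ring
            rw [he, abs_neg, abs_of_pos hd] at hk
            calc Δ ≤ (pb - pc) * D := hk
              _ ≤ (M - m) * D := by
                apply mul_le_mul_of_nonneg_right _ (le_of_lt hD0); linarith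
      · rcases le_total pa pc with h2 | h2
        · -- pb ≤ pa ≤ pc, middle a
          have hk := breadth_lb u b a c hu D dab' dac h1 h2
          have he : det2 (c - b) (a - b) = Δ := by rw [hΔdef, det2, det2]; simp; ring
          rw [he, abs_of_pos hd] at hk
          calc Δ ≤ (pc - pb) * D := hk
            _ ≤ (M - m) * D := by
              apply mul_le_mul_of_nonneg_right _ (le_of_lt hD0); linarith
        · rcases le_total pb pc with h3 | h3
          · -- pb ≤ pc ≤ pa, middle c
            have hk := breadth_lb u b c a hu D dcb dca h3 h2
            have he : det2 (a - b) (c - b) = -Δ := by rw [hΔdef, det2, det2]; simp; ring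
            rw [he, abs_neg, abs_of_pos hd] at hk
            calc Δ ≤ (pa - pb) * D := hk
              _ ≤ (M - m) * D := by
                apply mul_le_mul_of_nonneg_right _ (le_of_lt hD0); linarith
          · -- pc ≤ pb ≤ pa, middle b
            have hk := breadth_lb u c b a hu D dbc dba h3 h1
            have he : det2 (a - c) (b - c) = Δ := by rw [hΔdef, det2, det2]; simp; ring
            rw [he, abs_of_pos hd] at hk
            calc Δ ≤ (pa - pc) * D := hk
              _ ≤ (M - m) * D := by
                apply mul_le_mul_of_nonneg_right _ (le_of_lt hD0); linarith
    rw [div_le_iff₀ hD0]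
    exact key
  -- the optimal direction
  set n : E := (WithLp.equiv 2 (Fin 2 → ℝ)).symm ![-(b - a) 1 / D, (b - a) 0 / D] with hndef
  have hn0 : n 0 = -(b - a) 1 / D := rfl
  have hn1 : n 1 = (b - a) 0 / D := rfl
  have hDsq : (b - a) 0 ^ 2 + (b - a) 1 ^ 2 = D ^ 2 := by
    rw [← normsq, hDdef, dist_eq_norm, norm_sub_rev]
  have hnnorm : ‖n‖ = 1 := by
    have h2 : ‖n‖ ^ 2 = 1 := by
      have e0 : (b - a) 0 = b 0 - a 0 := sub_apply b a 0
      have e1 : (b - a) 1 = b 1 - a 1 := sub_apply b a 1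
      have hDsq' : (b 0 - a 0) ^ 2 + (b 1 - a 1) ^ 2 = D ^ 2 := by
        rw [← e0, ← e1]; exact hDsq
      rw [normsq, hn0, hn1, e0, e1]
      field_simp
      linear_combination hDsq'
    calc ‖n‖ = Real.sqrt (‖n‖ ^ 2) := (Real.sqrt_sq (norm_nonneg n)).symm
      _ = 1 := by rw [h2]; exact Real.sqrt_one
  have hpab : (⟪n, b⟫ : ℝ) = ⟪n, a⟫ := by
    rw [inner2, inner2, hn0, hn1]
    have e0 : (b - a) 0 = b 0 - a 0 := sub_apply b a 0
    have e1 : (b - a) 1 = b 1 - a 1 := sub_apply b a 1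
    rw [e0, e1]; field_simp; ring
  have hpca : (⟪n, c⟫ : ℝ) - ⟪n, a⟫ = Δ / D := by
    rw [inner2, inner2, hn0, hn1, hΔdef, det2]
    have e0 : (b - a) 0 = b 0 - a 0 := sub_apply b a 0
    have e1 : (b - a) 1 = b 1 - a 1 := sub_apply b a 1
    have f0 : (c - a) 0 = c 0 - a 0 := sub_apply c a 0
    have f1 : (c - a) 1 = c 1 - a 1 := sub_apply c a 1
    rw [e0, e1, f0, f1]; field_simp; ring
  have hΔD : 0 < Δ / D := div_pos hd hD0
  have hmem : Δ / D ∈ {w : ℝ | ∃ u : E, ‖u‖ = 1 ∧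
      w = sSup ((fun x => (inner ℝ u x : ℝ)) '' convexHull ℝ ({a, b, c} : Set E))
        - sInf ((fun x => (inner ℝ u x : ℝ)) '' convexHull ℝ ({a, b, c} : Set E))} := by
    refine ⟨n, hnnorm, ?_⟩
    rw [sSup_proj, sInf_proj]
    have hmax : max (max (⟪n, a⟫ : ℝ) (⟪n, b⟫ : ℝ)) (⟪n, c⟫ : ℝ) = ⟪n, c⟫ := by
      rw [hpab, max_self]
      apply max_eq_right; linarith [hpca, hΔD]
    have hmin : min (min (⟪n, a⟫ : ℝ) (⟪n, b⟫ : ℝ)) (⟪n, c⟫ : ℝ) = ⟪n, a⟫ := by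
      rw [hpab, min_self]
      apply min_eq_left; linarith [hpca, hΔD]
    rw [hmax, hmin, hpca]
  rw [width]
  exact le_antisymm (csInf_le ⟨Δ / D, hlb⟩ hmem) (le_csInf ⟨Δ / D, hmem⟩ hlb)

lemma pos_pos_aux (U V M : ℝ) (hU : 0 ≤ U) (hV : 0 ≤ V) (h : 0 < U * V - M ^ 2) :
    0 < U ∧ 0 < V := by
  constructor
  · by_contra hc
    push_neg at hc
    nlinarith [sq_nonneg M, mul_nonneg hV (neg_nonneg.2 hc)]
  · by_contra hc
    push_neg at hc
    nlinarith [sq_nonneg M, mul_nonneg hU (neg_nonneg.2 hc)]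

lemma circ_aux (l1 l2 l3 da db dc dO ρ R : ℝ) (h1 : 0 ≤ l1) (h2 : 0 ≤ l2) (h3 : 0 ≤ l3)
    (hda : da ^ 2 ≤ ρ ^ 2) (hdb : db ^ 2 ≤ ρ ^ 2) (hdc : dc ^ 2 ≤ ρ ^ 2)
    (hsum : l1 + l2 + l3 = 1)
    (hkey : l1 * da ^ 2 + l2 * db ^ 2 + l3 * dc ^ 2 = dO ^ 2 + R ^ 2) : R ^ 2 ≤ ρ ^ 2 := by
  nlinarith [mul_nonneg h1 (sub_nonneg.2 hda), mul_nonneg h2 (sub_nonneg.2 hdb),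
    mul_nonneg h3 (sub_nonneg.2 hdc), sq_nonneg dO]

lemma le_of_sq_le_sq (x y : ℝ) (hy : 0 ≤ y) (h : x ^ 2 ≤ y ^ 2) : x ≤ y := by
  nlinarith [sq_nonneg (x - y), sq_nonneg (x + y)]

lemma lagrange (a b c : E) : det2 (b - a) (c - a) ^ 2 =
    ‖b - a‖ ^ 2 * ‖c - a‖ ^ 2 - (⟪b - a, c - a⟫ : ℝ) ^ 2 := by
  rw [det2, normsq, normsq, inner2]; ring

set_option maxHeartbeats 1000000 in
lemma circum_eq (a b c : E) (hd : 0 < det2 (b - a) (c - a))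
    (hA : 0 ≤ (⟪b - a, c - a⟫ : ℝ)) (hB : 0 ≤ (⟪a - b, c - b⟫ : ℝ))
    (hC : 0 ≤ (⟪a - c, b - c⟫ : ℝ)) :
    circumradius (convexHull ℝ ({a, b, c} : Set E)) =
      Real.sqrt (‖b - a‖ ^ 2 * ‖c - a‖ ^ 2 * ‖c - b‖ ^ 2) / (2 * det2 (b - a) (c - a)) := by
  set U : ℝ := ‖b - a‖ ^ 2 with hUdef
  set V : ℝ := ‖c - a‖ ^ 2 with hVdef
  set Wd : ℝ := ‖c - b‖ ^ 2 with hWdef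
  set M : ℝ := (⟪b - a, c - a⟫ : ℝ) with hMdef
  set Δ : ℝ := det2 (b - a) (c - a) with hΔdef
  have hlag : Δ ^ 2 = U * V - M ^ 2 := lagrange a b c
  have hW : Wd = U + V - 2 * M := by
    have e : c - b = (c - a) - (b - a) := by abel
    rw [hWdef, e, norm_sub_sq_real, real_inner_comm]
    rw [hMdef, hUdef, hVdef]; ring
  have hd2 : 0 < U * V - M ^ 2 := by rw [← hlag]; positivity
  have hUM : 0 ≤ U - M := by
    have e : (⟪a - b, c - b⟫ : ℝ) = U - M := by
      have e1 : a - b = -(b - a) := by abel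
      have e2 : c - b = (c - a) - (b - a) := by abel
      rw [e1, e2, inner_neg_left, inner_sub_right, real_inner_self_eq_norm_sq, ← hMdef]
      ring
    linarith [e ▸ hB]
  have hVM : 0 ≤ V - M := by
    have e : (⟪a - c, b - c⟫ : ℝ) = V - M := by
      have e1 : a - c = -(c - a) := by abel
      have e2 : b - c = (b - a) - (c - a) := by abel
      rw [e1, e2, inner_neg_left, inner_sub_right, real_inner_self_eq_norm_sq,
        real_inner_comm, ← hMdef]
      ring
    linarith [e ▸ hC]
  obtain ⟨hU0, hV0⟩ := pos_pos_aux U V M (by positivity) (by positivity) hd2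
  have hWd0 : 0 ≤ Wd := by rw [hWdef]; positivity
  set d : ℝ := U * V - M ^ 2 with hddef
  set s : ℝ := V * (U - M) / (2 * d) with hsdef
  set t : ℝ := U * (V - M) / (2 * d) with htdef
  have hs0 : 0 ≤ s := by
    apply div_nonneg (mul_nonneg (le_of_lt hV0) hUM); linarith
  have ht0 : 0 ≤ t := by
    apply div_nonneg (mul_nonneg (le_of_lt hU0) hVM); linarith
  have hst : 0 ≤ 1 - s - t := by
    have e : 1 - s - t = M * Wd / (2 * d) := by
      rw [hsdef, htdef, hW]; field_simp; ring
    rw [e]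
    apply div_nonneg (mul_nonneg hA hWd0); linarith
  set O : E := a + s • (b - a) + t • (c - a) with hOdef
  set R : ℝ := Real.sqrt (U * V * Wd) / (2 * Δ) with hRdef
  have hR0 : 0 ≤ R := by
    apply div_nonneg (Real.sqrt_nonneg _); linarith
  have hR2 : R ^ 2 = U * V * Wd / (4 * d) := by
    rw [hRdef, div_pow, Real.sq_sqrt (by positivity), mul_pow, hlag]
    ring_nf
  -- squared distances from O to the vertices
  have hOa : O - a = s • (b - a) + t • (c - a) := by rw [hOdef]; abel
  have hOb : O - b = (s - 1) • (b - a) + t • (c - a) := by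
    rw [hOdef, sub_smul, one_smul]; abel
  have hOc : O - c = s • (b - a) + (t - 1) • (c - a) := by
    rw [hOdef, sub_smul, one_smul]; abel
  have hnorm_comb : ∀ p q : ℝ, ‖p • (b - a) + q • (c - a)‖ ^ 2
      = p ^ 2 * U + 2 * p * q * M + q ^ 2 * V := by
    intro p q
    rw [norm_add_sq_real, norm_smul, norm_smul, real_inner_smul_left, real_inner_smul_right]
    rw [mul_pow, mul_pow, Real.norm_eq_abs, Real.norm_eq_abs, sq_abs, sq_abs]
    rw [hUdef, hVdef, hMdef]; ring
  have hsU : 2 * (s * U + t * M) = U := by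
    rw [hsdef, htdef]; field_simp; ring
  have htV : 2 * (s * M + t * V) = V := by
    rw [hsdef, htdef]; field_simp; ring
  have hC0 : s ^ 2 * U + 2 * s * t * M + t ^ 2 * V = U * V * Wd / (4 * d) := by
    rw [hsdef, htdef, hW]; field_simp; ring
  have hC2 : s ^ 2 * U + 2 * s * t * M + t ^ 2 * V = R ^ 2 := by rw [hC0, hR2]
  have hdista : dist O a ^ 2 = R ^ 2 := by
    rw [dist_eq_norm, hOa, hnorm_comb]; exact hC2
  have hdistb : dist O b ^ 2 = R ^ 2 := by
    rw [dist_eq_norm, hOb, hnorm_comb]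
    linear_combination hC2 - hsU
  have hdistc : dist O c ^ 2 = R ^ 2 := by
    rw [dist_eq_norm, hOc, hnorm_comb]
    linear_combination hC2 - htV
  have hdista' : dist O a = R := by
    rw [← Real.sqrt_sq dist_nonneg, hdista, Real.sqrt_sq hR0]
  have hdistb' : dist O b = R := by
    rw [← Real.sqrt_sq dist_nonneg, hdistb, Real.sqrt_sq hR0]
  have hdistc' : dist O c = R := by
    rw [← Real.sqrt_sq dist_nonneg, hdistc, Real.sqrt_sq hR0]
  -- membership
  have hsub : convexHull ℝ ({a, b, c} : Set E) ⊆ Metric.closedBall O R := by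
    apply convexHull_min _ (convex_closedBall O R)
    rintro x (rfl | rfl | rfl)
    · rw [Metric.mem_closedBall, dist_comm, hdista']
    · rw [Metric.mem_closedBall, dist_comm, hdistb']
    · rw [Metric.mem_closedBall, dist_comm, hdistc']
  have hmem : R ∈ {ρ : ℝ | 0 ≤ ρ ∧ ∃ p, convexHull ℝ ({a, b, c} : Set E) ⊆ Metric.closedBall p ρ} :=
    ⟨hR0, O, hsub⟩
  -- lower bound
  have hlow : ∀ ρ ∈ {ρ : ℝ | 0 ≤ ρ ∧ ∃ p,
      convexHull ℝ ({a, b, c} : Set E) ⊆ Metric.closedBall p ρ}, R ≤ ρ := by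
    rintro ρ ⟨hρ0, p, hball⟩
    have hmema : dist p a ≤ ρ := by
      rw [dist_comm]
      exact hball (subset_convexHull ℝ _ (by simp : a ∈ ({a,b,c} : Set E)))
    have hmemb : dist p b ≤ ρ := by
      rw [dist_comm]
      exact hball (subset_convexHull ℝ _ (by simp : b ∈ ({a,b,c} : Set E)))
    have hmemc : dist p c ≤ ρ := by
      rw [dist_comm]
      exact hball (subset_convexHull ℝ _ (by simp : c ∈ ({a,b,c} : Set E)))
    -- the key identity
    have hkey : (1 - s - t) * dist p a ^ 2 + s * dist p b ^ 2 + t * dist p c ^ 2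
        = dist p O ^ 2 + R ^ 2 := by
      have hpa : dist p a ^ 2 = ‖p - a‖ ^ 2 := by rw [dist_eq_norm]
      have hpb : dist p b ^ 2 = ‖p - a‖ ^ 2 - 2 * (⟪p - a, b - a⟫ : ℝ) + U := by
        have e : p - b = (p - a) - (b - a) := by abel
        rw [dist_eq_norm, e, norm_sub_sq_real, hUdef]
      have hpc : dist p c ^ 2 = ‖p - a‖ ^ 2 - 2 * (⟪p - a, c - a⟫ : ℝ) + V := by
        have e : p - c = (p - a) - (c - a) := by abel
        rw [dist_eq_norm, e, norm_sub_sq_real, hVdef]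
      have hpO : dist p O ^ 2 = ‖p - a‖ ^ 2
          - 2 * (s * (⟪p - a, b - a⟫ : ℝ) + t * (⟪p - a, c - a⟫ : ℝ))
          + (s ^ 2 * U + 2 * s * t * M + t ^ 2 * V) := by
        have e : p - O = (p - a) - (s • (b - a) + t • (c - a)) := by rw [hOdef]; abel
        rw [dist_eq_norm, e, norm_sub_sq_real, hnorm_comb, inner_add_right,
          real_inner_smul_right, real_inner_smul_right]
        try ring
      rw [hpa, hpb, hpc, hpO]
      linear_combination (2 : ℝ) * hC2 - hC2 + (-s) * hsU + (-t) * htV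
    have hd2a : dist p a ^ 2 ≤ ρ ^ 2 := pow_le_pow_left₀ dist_nonneg hmema 2
    have hd2b : dist p b ^ 2 ≤ ρ ^ 2 := pow_le_pow_left₀ dist_nonneg hmemb 2
    have hd2c : dist p c ^ 2 ≤ ρ ^ 2 := pow_le_pow_left₀ dist_nonneg hmemc 2
    have hRρ : R ^ 2 ≤ ρ ^ 2 :=
      circ_aux (1 - s - t) s t (dist p a) (dist p b) (dist p c) (dist p O) ρ R
        hst hs0 ht0 hd2a hd2b hd2c (by ring) hkey
    exact le_of_sq_le_sq R ρ hρ0 hRρ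
  have : circumradius (convexHull ℝ ({a, b, c} : Set E)) = R := by
    rw [circumradius]
    exact le_antisymm (csInf_le ⟨R, hlow⟩ hmem) (le_csInf ⟨R, hmem⟩ hlow)
  rw [this, hRdef, hUdef, hVdef, hWdef, hΔdef]

lemma w_pos_aux (U V M : ℝ) (hU : 0 < U) (hV : 0 < V) (h : 0 < U * V - M ^ 2) :
    0 < U + V - 2 * M := by
  nlinarith [sq_nonneg (U - V)]

lemma norm_pos_of_sq (x : E) (h : 0 < ‖x‖ ^ 2) : 0 < ‖x‖ := by
  nlinarith [norm_nonneg x]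

lemma det2_add_right (u v w : E) : det2 u (v + w) = det2 u v + det2 u w := by
  simp [det2]; ring

lemma det2_sum_id (a b c p : E) :
    det2 (b - a) (p - a) + det2 (c - b) (p - b) + det2 (a - c) (p - c)
      = det2 (b - a) (c - a) := by
  simp [det2, sub_apply]; ring

lemma halfplane_convex (u q : E) : Convex ℝ {x : E | 0 ≤ det2 u (x - q)} := by
  intro x hx y hy α β hα hβ hs
  simp only [mem_setOf_eq] at *
  have e : det2 u ((α • x + β • y) - q) = α * det2 u (x - q) + β * det2 u (y - q) := by
    simp only [det2, sub_apply, PiLp.add_apply, PiLp.smul_apply, smul_eq_mul]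
    linear_combination (u 0 * q 1 - u 1 * q 0) * hs
  rw [e]
  exact add_nonneg (mul_nonneg hα hx) (mul_nonneg hβ hy)

lemma support_bound (u q p : E) (ρ : ℝ) (hρ : 0 ≤ ρ) (hu : 0 < ‖u‖)
    (hball : Metric.closedBall p ρ ⊆ {x : E | 0 ≤ det2 u (x - q)}) :
    ρ * ‖u‖ ≤ det2 u (p - q) := by
  set J : E := (WithLp.equiv 2 (Fin 2 → ℝ)).symm ![-(u 1), u 0] with hJdef
  have hJ0 : J 0 = -(u 1) := rfl
  have hJ1 : J 1 = u 0 := rfl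
  have hJnorm : ‖J‖ = ‖u‖ := by
    have h1 : ‖J‖ ^ 2 = ‖u‖ ^ 2 := by rw [normsq, normsq, hJ0, hJ1]; ring
    calc ‖J‖ = Real.sqrt (‖J‖ ^ 2) := (Real.sqrt_sq (norm_nonneg _)).symm
      _ = Real.sqrt (‖u‖ ^ 2) := by rw [h1]
      _ = ‖u‖ := Real.sqrt_sq (norm_nonneg _)
  set y : E := p - (ρ / ‖u‖) • J with hydef
  have hymem : y ∈ Metric.closedBall p ρ := by
    rw [Metric.mem_closedBall]
    have e : y - p = -((ρ / ‖u‖) • J) := by rw [hydef]; abel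
    rw [dist_eq_norm, e, norm_neg, norm_smul, Real.norm_eq_abs,
      abs_of_nonneg (div_nonneg hρ (le_of_lt hu)), hJnorm]
    rw [div_mul_cancel₀ _ (ne_of_gt hu)]
  have h0 : 0 ≤ det2 u (y - q) := hball hymem
  have hy0 : y 0 = p 0 - (ρ / ‖u‖) * (-(u 1)) := by rw [hydef]; simp [hJ0]
  have hy1 : y 1 = p 1 - (ρ / ‖u‖) * (u 0) := by rw [hydef]; simp [hJ1]
  have hexp : det2 u (y - q) = det2 u (p - q) - (ρ / ‖u‖) * (u 0 ^ 2 + u 1 ^ 2) := by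
    simp only [det2, sub_apply, hy0, hy1]
    ring
  have husq : u 0 ^ 2 + u 1 ^ 2 = ‖u‖ ^ 2 := (normsq u).symm
  have hfin : (ρ / ‖u‖) * ‖u‖ ^ 2 = ρ * ‖u‖ := by
    field_simp
  rw [hexp, husq, hfin] at h0
  linarith

set_option maxHeartbeats 1000000 in
lemma inradius_eq (a b c : E) (hd : 0 < det2 (b - a) (c - a)) :
    inradius (convexHull ℝ ({a, b, c} : Set E)) =
      det2 (b - a) (c - a) / (‖b - a‖ + ‖c - a‖ + ‖c - b‖) := by
  set Δ : ℝ := det2 (b - a) (c - a) with hΔdef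
  have hΔne : Δ ≠ 0 := ne_of_gt hd
  have hlag : Δ ^ 2 = ‖b - a‖ ^ 2 * ‖c - a‖ ^ 2 - (⟪b - a, c - a⟫ : ℝ) ^ 2 := lagrange a b c
  have hd2 : 0 < ‖b - a‖ ^ 2 * ‖c - a‖ ^ 2 - (⟪b - a, c - a⟫ : ℝ) ^ 2 := by
    rw [← hlag]; positivity
  obtain ⟨hU0, hV0⟩ := pos_pos_aux _ _ _ (by positivity) (by positivity) hd2
  have hnb : 0 < ‖b - a‖ := norm_pos_of_sq _ hU0
  have hnc : 0 < ‖c - a‖ := norm_pos_of_sq _ hV0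
  have hnw : 0 < ‖c - b‖ := by
    apply norm_pos_of_sq
    have e : c - b = (c - a) - (b - a) := by abel
    rw [e, norm_sub_sq_real, real_inner_comm]
    have := w_pos_aux (‖b - a‖ ^ 2) (‖c - a‖ ^ 2) (⟪b - a, c - a⟫ : ℝ) hU0 hV0 hd2
    linarith
  set P : ℝ := ‖b - a‖ + ‖c - a‖ + ‖c - b‖ with hPdef
  have hP0 : 0 < P := by positivity
  have hPne : P ≠ 0 := ne_of_gt hP0
  set r : ℝ := Δ / P with hrdef
  have hr0 : 0 < r := div_pos hd hP0
  -- half-plane containments of the hull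
  have hHc : convexHull ℝ ({a, b, c} : Set E) ⊆ {x : E | 0 ≤ det2 (b - a) (x - a)} := by
    apply convexHull_min _ (halfplane_convex _ _)
    rintro x (rfl | rfl | rfl)
    · show (0:ℝ) ≤ det2 (b - x) (x - x); simp [det2, sub_self]
    · show (0:ℝ) ≤ det2 (x - a) (x - a); simp [det2, sub_apply]; ring_nf; simp
    · exact le_of_lt hd
  have hHa : convexHull ℝ ({a, b, c} : Set E) ⊆ {x : E | 0 ≤ det2 (c - b) (x - b)} := by
    apply convexHull_min _ (halfplane_convex _ _)
    rintro x (rfl | rfl | rfl)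
    · show (0:ℝ) ≤ det2 (c - b) (x - b)
      have e : det2 (c - b) (x - b) = Δ := by
        rw [hΔdef]; simp only [det2, sub_apply]; ring
      rw [e]; exact le_of_lt hd
    · show (0:ℝ) ≤ det2 (c - x) (x - x); simp [det2, sub_self]
    · show (0:ℝ) ≤ det2 (x - b) (x - b); simp [det2, sub_apply]; ring_nf; simp
  have hHb : convexHull ℝ ({a, b, c} : Set E) ⊆ {x : E | 0 ≤ det2 (a - c) (x - c)} := by
    apply convexHull_min _ (halfplane_convex _ _)
    rintro x (rfl | rfl | rfl)
    · show (0:ℝ) ≤ det2 (x - c) (x - c); simp [det2, sub_apply]; ring_nf; simp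
    · show (0:ℝ) ≤ det2 (a - c) (x - c)
      have e : det2 (a - c) (x - c) = Δ := by
        rw [hΔdef]; simp only [det2, sub_apply]; ring
      rw [e]; exact le_of_lt hd
    · show (0:ℝ) ≤ det2 (a - x) (x - x); simp [det2, sub_self]
  -- upper bound
  have hub : ∀ ρ ∈ {ρ : ℝ | 0 ≤ ρ ∧ ∃ p,
      Metric.closedBall p ρ ⊆ convexHull ℝ ({a, b, c} : Set E)}, ρ ≤ r := by
    rintro ρ ⟨hρ0, p, hball⟩
    have h1 := support_bound (b - a) a p ρ hρ0 hnb (subset_trans hball hHc)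
    have h2 := support_bound (c - b) b p ρ hρ0 hnw (subset_trans hball hHa)
    have h3 : ρ * ‖c - a‖ ≤ det2 (a - c) (p - c) := by
      have hval : 0 < ‖a - c‖ := by rw [norm_sub_rev]; exact hnc
      have := support_bound (a - c) c p ρ hρ0 hval (subset_trans hball hHb)
      rw [norm_sub_rev a c] at this
      exact this
    have hsum := det2_sum_id a b c p
    rw [hrdef, le_div_iff₀ hP0, hPdef]
    nlinarith [h1, h2, h3, hsum]
  -- the inscribed ball
  set I : E := a + (‖c - a‖ / P) • (b - a) + (‖b - a‖ / P) • (c - a) with hIdef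
  have hI0 : I 0 = a 0 + (‖c - a‖ / P) * (b 0 - a 0) + (‖b - a‖ / P) * (c 0 - a 0) := by
    rw [hIdef]; simp
  have hI1 : I 1 = a 1 + (‖c - a‖ / P) * (b 1 - a 1) + (‖b - a‖ / P) * (c 1 - a 1) := by
    rw [hIdef]; simp
  have hball : Metric.closedBall I r ⊆ convexHull ℝ ({a, b, c} : Set E) := by
    intro x hx
    rw [Metric.mem_closedBall] at hx
    have hxI : ‖x - I‖ ≤ r := by rw [← dist_eq_norm]; exact hx
    have key : ∀ u q : E, ‖u‖ * r ≤ det2 u (I - q) → 0 ≤ det2 u (x - q) := by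
      intro u q hlow
      have hsplit : x - q = (x - I) + (I - q) := by abel
      rw [hsplit, det2_add_right]
      have habs : |det2 u (x - I)| ≤ ‖u‖ * r := by
        calc |det2 u (x - I)| ≤ ‖u‖ * ‖x - I‖ := abs_det2_le _ _
          _ ≤ ‖u‖ * r := mul_le_mul_of_nonneg_left hxI (norm_nonneg u)
      have h' := (abs_le.1 habs).1
      linarith
    have hnum1 : 0 ≤ det2 (c - b) (x - b) := by
      refine key _ _ ?_
      have e : det2 (c - b) (I - b) = ‖c - b‖ * (Δ / P) := by
        simp only [hΔdef, det2, sub_apply, hI0, hI1]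
        field_simp
        ring
      rw [e, hrdef]
    have hnum2 : 0 ≤ det2 (a - c) (x - c) := by
      refine key _ _ ?_
      have e : det2 (a - c) (I - c) = ‖c - a‖ * (Δ / P) := by
        simp only [hΔdef, det2, sub_apply, hI0, hI1]
        field_simp
        ring
      rw [e, hrdef, norm_sub_rev a c]
    have hnum3 : 0 ≤ det2 (b - a) (x - a) := by
      refine key _ _ ?_
      have e : det2 (b - a) (I - a) = ‖b - a‖ * (Δ / P) := by
        simp only [hΔdef, det2, sub_apply, hI0, hI1]
        field_simp
        ring
      rw [e, hrdef]
    -- barycentric representation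
    set μ1 : ℝ := det2 (c - b) (x - b) / Δ with hμ1
    set μ2 : ℝ := det2 (a - c) (x - c) / Δ with hμ2
    set μ3 : ℝ := det2 (b - a) (x - a) / Δ with hμ3
    have hμ1nn : 0 ≤ μ1 := div_nonneg hnum1 (le_of_lt hd)
    have hμ2nn : 0 ≤ μ2 := div_nonneg hnum2 (le_of_lt hd)
    have hμ3nn : 0 ≤ μ3 := div_nonneg hnum3 (le_of_lt hd)
    have hμsum : μ1 + μ2 + μ3 = 1 := by
      rw [hμ1, hμ2, hμ3, ← add_div, ← add_div, div_eq_one_iff_eq hΔne, hΔdef]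
      linear_combination det2_sum_id a b c x
    have hcomb : μ1 • a + μ2 • b + μ3 • c = x := by
      have hkey0 : det2 (c - b) (x - b) * a 0 + det2 (a - c) (x - c) * b 0
          + det2 (b - a) (x - a) * c 0 = Δ * x 0 := by
        rw [hΔdef]; simp only [det2, sub_apply]; ring
      have hkey1 : det2 (c - b) (x - b) * a 1 + det2 (a - c) (x - c) * b 1
          + det2 (b - a) (x - a) * c 1 = Δ * x 1 := by
        rw [hΔdef]; simp only [det2, sub_apply]; ring
      have h0 : (μ1 • a + μ2 • b + μ3 • c) 0 = x 0 := by
        simp only [PiLp.add_apply, PiLp.smul_apply, smul_eq_mul, hμ1, hμ2, hμ3]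
        field_simp
        linear_combination hkey0
      have h1 : (μ1 • a + μ2 • b + μ3 • c) 1 = x 1 := by
        simp only [PiLp.add_apply, PiLp.smul_apply, smul_eq_mul, hμ1, hμ2, hμ3]
        field_simp
        linear_combination hkey1
      apply PiLp.ext; intro i
      fin_cases i
      · exact h0
      · exact h1
    have hmem3 : μ1 • a + μ2 • b + μ3 • c ∈ convexHull ℝ ({a, b, c} : Set E) := by
      have h := (convex_convexHull ℝ ({a, b, c} : Set E)).sum_mem
        (t := (Finset.univ : Finset (Fin 3))) (w := ![μ1, μ2, μ3]) (z := ![a, b, c])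
        (fun i _ => by fin_cases i <;> simpa)
        (by simp [Fin.sum_univ_three]; linarith [hμsum])
        (fun i _ => by
          fin_cases i
          · exact subset_convexHull ℝ _ (by simp)
          · exact subset_convexHull ℝ _ (by simp)
          · exact subset_convexHull ℝ _ (by simp))
      simpa [Fin.sum_univ_three] using h
    rw [← hcomb]
    exact hmem3
  have hmem : r ∈ {ρ : ℝ | 0 ≤ ρ ∧ ∃ p,
      Metric.closedBall p ρ ⊆ convexHull ℝ ({a, b, c} : Set E)} := ⟨le_of_lt hr0, I, hball⟩
  rw [inradius]
  exact le_antisymm (csSup_le ⟨r, hmem⟩ hub) (le_csSup ⟨r, hub⟩ hmem)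


lemma diam_eq (a b c : E) (hab : dist a c ≤ dist a b) (hbc : dist b c ≤ dist a b) :
    sDiam (convexHull ℝ ({a, b, c} : Set E)) = dist a b := by
  rw [sDiam, convexHull_diam, Metric.diam_triple, max_eq_left hab, max_eq_left hbc]

set_option maxHeartbeats 1000000 in
lemma main (a b c : E) (hd : 0 < det2 (b - a) (c - a))
    (hA : 0 ≤ (⟪b - a, c - a⟫ : ℝ)) (hB : 0 ≤ (⟪a - b, c - b⟫ : ℝ))
    (hC : 0 ≤ (⟪a - c, b - c⟫ : ℝ))
    (hab : dist a c ≤ dist a b) (hbc : dist b c ≤ dist a b) :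
    width (convexHull ℝ ({a, b, c} : Set E)) *
        sDiam (convexHull ℝ ({a, b, c} : Set E)) =
      2 * inradius (convexHull ℝ ({a, b, c} : Set E)) *
        (sDiam (convexHull ℝ ({a, b, c} : Set E)) +
          (2 * inradius (convexHull ℝ ({a, b, c} : Set E)) *
              circumradius (convexHull ℝ ({a, b, c} : Set E)) /
              sDiam (convexHull ℝ ({a, b, c} : Set E))) *
            (1 + Real.sqrt (1 -
              (sDiam (convexHull ℝ ({a, b, c} : Set E)) /
                (2 * circumradius (convexHull ℝ ({a, b, c} : Set E)))) ^ 2))) := by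
  set Δ : ℝ := det2 (b - a) (c - a) with hΔdef
  set M : ℝ := (⟪b - a, c - a⟫ : ℝ) with hMdef
  set p : ℝ := ‖b - a‖ with hpdef
  set q : ℝ := ‖c - a‖ with hqdef
  set w : ℝ := ‖c - b‖ with hwdef
  have hΔ2 : Δ ^ 2 = p ^ 2 * q ^ 2 - M ^ 2 := lagrange a b c
  have hd2 : 0 < p ^ 2 * q ^ 2 - M ^ 2 := by rw [← hΔ2]; positivity
  obtain ⟨hU0, hV0⟩ := pos_pos_aux _ _ _ (by positivity) (by positivity) hd2
  have hp : 0 < p := norm_pos_of_sq _ hU0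
  have hq : 0 < q := norm_pos_of_sq _ hV0
  have hw2 : w ^ 2 = p ^ 2 + q ^ 2 - 2 * M := by
    have e : c - b = (c - a) - (b - a) := by abel
    rw [hwdef, e, norm_sub_sq_real, real_inner_comm, ← hMdef, ← hpdef, ← hqdef]
    ring
  have hw : 0 < w := by
    apply norm_pos_of_sq
    have := w_pos_aux (p ^ 2) (q ^ 2) M hU0 hV0 hd2
    rw [hw2]
    linarith
  have hVM : 0 ≤ q ^ 2 - M := by
    have e : (⟪a - c, b - c⟫ : ℝ) = q ^ 2 - M := by
      have e1 : a - c = -(c - a) := by abel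
      have e2 : b - c = (b - a) - (c - a) := by abel
      rw [e1, e2, inner_neg_left, inner_sub_right, real_inner_self_eq_norm_sq,
        real_inner_comm, ← hMdef, ← hqdef]
      ring
    linarith [e ▸ hC]
  have hdab : dist a b = p := by rw [dist_eq_norm, norm_sub_rev]
  -- rewrite the four quantities
  have hwidth : width (convexHull ℝ ({a, b, c} : Set E)) = Δ / p := by
    rw [width_eq a b c hd hab hbc, hdab]
  have hsD : sDiam (convexHull ℝ ({a, b, c} : Set E)) = p := by
    rw [diam_eq a b c hab hbc, hdab]
  have hinr : inradius (convexHull ℝ ({a, b, c} : Set E)) = Δ / (p + q + w) :=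
    inradius_eq a b c hd
  have hcirc : circumradius (convexHull ℝ ({a, b, c} : Set E)) = p * q * w / (2 * Δ) := by
    rw [circum_eq a b c hd hA hB hC]
    congr 1
    rw [show p ^ 2 * q ^ 2 * w ^ 2 = (p * q * w) ^ 2 by ring]
    exact Real.sqrt_sq (by positivity)
  rw [hwidth, hsD, hinr, hcirc]
  -- the square root simplification
  have hΔne : (Δ : ℝ) ≠ 0 := ne_of_gt hd
  have e1 : (p / (2 * (p * q * w / (2 * Δ)))) ^ 2 = Δ ^ 2 / (q ^ 2 * w ^ 2) := by
    field_simp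
  have h4 : (q ^ 2 * w ^ 2 - Δ ^ 2) * 4 = (q ^ 2 - p ^ 2 + w ^ 2) ^ 2 := by
    linear_combination (p ^ 2 + q ^ 2 + 2 * M - w ^ 2) * hw2 - 4 * hΔ2
  have e3 : 1 - Δ ^ 2 / (q ^ 2 * w ^ 2) = ((q ^ 2 - p ^ 2 + w ^ 2) / (2 * q * w)) ^ 2 := by
    field_simp
    linear_combination h4
  have hnn2 : 0 ≤ (q ^ 2 - p ^ 2 + w ^ 2) / (2 * q * w) := by
    apply div_nonneg _ (by positivity)
    have : q ^ 2 - p ^ 2 + w ^ 2 = 2 * (q ^ 2 - M) := by linarith [hw2]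
    linarith
  rw [e1, e3, Real.sqrt_sq hnn2]
  have hPne : (p + q + w : ℝ) ≠ 0 := by positivity
  field_simp
  ring

lemma indep_det (a b c : E) (h : AffineIndependent ℝ ![a, b, c]) :
    det2 (b - a) (c - a) ≠ 0 := by
  intro h0
  apply affineIndependent_iff_not_collinear_set.mp h
  by_cases hba : b = a
  · rw [collinear_iff_of_mem (show a ∈ ({a, b, c} : Set E) by simp)]
    refine ⟨c - a, ?_⟩
    rintro x (rfl | rfl | rfl)
    · exact ⟨0, by simp⟩
    · exact ⟨0, by simp [hba]⟩
    · exact ⟨1, by simp⟩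
  · have hU : (0 : ℝ) < (b - a) 0 ^ 2 + (b - a) 1 ^ 2 := by
      rw [← normsq]
      have : b - a ≠ 0 := sub_ne_zero.2 hba
      have h1 : 0 < ‖b - a‖ := norm_pos_iff.2 this
      positivity
    set k : ℝ := ((b - a) 0 * (c - a) 0 + (b - a) 1 * (c - a) 1)
      / ((b - a) 0 ^ 2 + (b - a) 1 ^ 2) with hkdef
    have hca : c - a = k • (b - a) := by
      apply PiLp.ext; intro i
      have hne : (b - a) 0 ^ 2 + (b - a) 1 ^ 2 ≠ 0 := ne_of_gt hU
      fin_cases i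
      · show (c - a) 0 = (k • (b - a)) 0
        rw [PiLp.smul_apply, smul_eq_mul, hkdef]
        rw [div_mul_eq_mul_div, eq_div_iff hne]
        have hz : det2 (b - a) (c - a) = 0 := h0
        rw [det2] at hz
        linear_combination (-(b - a) 1) * hz
      · show (c - a) 1 = (k • (b - a)) 1
        rw [PiLp.smul_apply, smul_eq_mul, hkdef]
        rw [div_mul_eq_mul_div, eq_div_iff hne]
        have hz : det2 (b - a) (c - a) = 0 := h0
        rw [det2] at hz
        linear_combination ((b - a) 0) * hz
    rw [collinear_iff_of_mem (show a ∈ ({a, b, c} : Set E) by simp)]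
    refine ⟨b - a, ?_⟩
    rintro x (rfl | rfl | rfl)
    · exact ⟨0, by simp⟩
    · exact ⟨1, by simp⟩
    · refine ⟨k, ?_⟩
      have : x = k • (b - a) + a := by
        rw [← hca]; abel
      simpa using this
end AT

theorem acute_triangle_width_eq (a b c : EuclideanSpace ℝ (Fin 2))
    (hindep : AffineIndependent ℝ ![a, b, c])
    (hA : 0 ≤ (inner ℝ (b - a) (c - a) : ℝ))
    (hB : 0 ≤ (inner ℝ (a - b) (c - b) : ℝ))
    (hC : 0 ≤ (inner ℝ (a - c) (b - c) : ℝ)) :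
    width (convexHull ℝ ({a, b, c} : Set (EuclideanSpace ℝ (Fin 2)))) *
        sDiam (convexHull ℝ ({a, b, c} : Set (EuclideanSpace ℝ (Fin 2)))) =
      2 * inradius (convexHull ℝ ({a, b, c} : Set (EuclideanSpace ℝ (Fin 2)))) *
        (sDiam (convexHull ℝ ({a, b, c} : Set (EuclideanSpace ℝ (Fin 2)))) +
          (2 * inradius (convexHull ℝ ({a, b, c} : Set (EuclideanSpace ℝ (Fin 2)))) *
              circumradius (convexHull ℝ ({a, b, c} : Set (EuclideanSpace ℝ (Fin 2)))) /
              sDiam (convexHull ℝ ({a, b, c} : Set (EuclideanSpace ℝ (Fin 2))))) *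
            (1 + Real.sqrt (1 -
              (sDiam (convexHull ℝ ({a, b, c} : Set (EuclideanSpace ℝ (Fin 2)))) /
                (2 * circumradius (convexHull ℝ
                  ({a, b, c} : Set (EuclideanSpace ℝ (Fin 2)))))) ^ 2))) := by
  have hd0 : AT.det2 (b - a) (c - a) ≠ 0 := AT.indep_det a b c hindep
  have hA2 : 0 ≤ (inner ℝ (c - a) (b - a) : ℝ) := by rw [real_inner_comm]; exact hA
  have hB2 : 0 ≤ (inner ℝ (c - b) (a - b) : ℝ) := by rw [real_inner_comm]; exact hB
  have hC2 : 0 ≤ (inner ℝ (b - c) (a - c) : ℝ) := by rw [real_inner_comm]; exact hC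
  have sBAC : ({b, a, c} : Set (EuclideanSpace ℝ (Fin 2))) = {a, b, c} := by
    ext x; simp; tauto
  have sBCA : ({b, c, a} : Set (EuclideanSpace ℝ (Fin 2))) = {a, b, c} := by
    ext x; simp; tauto
  have sCBA : ({c, b, a} : Set (EuclideanSpace ℝ (Fin 2))) = {a, b, c} := by
    ext x; simp; tauto
  have sACB : ({a, c, b} : Set (EuclideanSpace ℝ (Fin 2))) = {a, b, c} := by
    ext x; simp; tauto
  have sCAB : ({c, a, b} : Set (EuclideanSpace ℝ (Fin 2))) = {a, b, c} := by
    ext x; simp; tauto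
  -- determinant values of permutations
  have dBAC : AT.det2 (a - b) (c - b) = -AT.det2 (b - a) (c - a) := by
    simp only [AT.det2, AT.sub_apply]; ring
  have dBCA : AT.det2 (c - b) (a - b) = AT.det2 (b - a) (c - a) := by
    simp only [AT.det2, AT.sub_apply]; ring
  have dCBA : AT.det2 (b - c) (a - c) = -AT.det2 (b - a) (c - a) := by
    simp only [AT.det2, AT.sub_apply]; ring
  have dACB : AT.det2 (c - a) (b - a) = -AT.det2 (b - a) (c - a) := by
    simp only [AT.det2, AT.sub_apply]; ring
  have dCAB : AT.det2 (a - c) (b - c) = AT.det2 (b - a) (c - a) := by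
    simp only [AT.det2, AT.sub_apply]; ring
  rcases le_total (dist a c) (dist a b) with h1 | h1
  · rcases le_total (dist b c) (dist a b) with h2 | h2
    · -- side ab is longest
      rcases hd0.lt_or_gt with hneg | hpos
      · have hd' : 0 < AT.det2 (a - b) (c - b) := by rw [dBAC]; linarith
        have H := AT.main b a c hd' hB hA hC2
          (by rw [dist_comm b a]; exact h2)
          (by rw [dist_comm b a]; exact h1)
        rw [sBAC] at H
        exact H
      · exact AT.main a b c hpos hA hB hC h1 h2
    · -- side bc is longest
      have h3 : dist a c ≤ dist b c := le_trans h1 h2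
      rcases hd0.lt_or_gt with hneg | hpos
      · have hd' : 0 < AT.det2 (b - c) (a - c) := by rw [dCBA]; linarith
        have H := AT.main c b a hd' hC2 hB2 hA2
          (by rw [dist_comm c a, dist_comm c b]; exact h3)
          (by rw [dist_comm c b, dist_comm b a]; exact h2)
        rw [sCBA] at H
        exact H
      · have hd' : 0 < AT.det2 (c - b) (a - b) := by rw [dBCA]; linarith
        have H := AT.main b c a hd' hB2 hC2 hA
          (by rw [dist_comm b a]; exact h2)
          (by rw [dist_comm c a]; exact h3)
        rw [sBCA] at H
        exact H
  · rcases le_total (dist b c) (dist a c) with h2 | h2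
    · -- side ac is longest
      rcases hd0.lt_or_gt with hneg | hpos
      · have hd' : 0 < AT.det2 (c - a) (b - a) := by rw [dACB]; linarith
        have H := AT.main a c b hd' hA2 hC hB
          h1
          (by rw [dist_comm c b]; exact h2)
        rw [sACB] at H
        exact H
      · have hd' : 0 < AT.det2 (a - c) (b - c) := by rw [dCAB]; linarith
        have H := AT.main c a b hd' hC hA2 hB2
          (by rw [dist_comm c b, dist_comm c a]; exact h2)
          (by rw [dist_comm c a]; exact h1)
        rw [sCAB] at H
        exact H
    · -- side bc is longest
      have h3 : dist a b ≤ dist b c := le_trans h1 h2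
      rcases hd0.lt_or_gt with hneg | hpos
      · have hd' : 0 < AT.det2 (b - c) (a - c) := by rw [dCBA]; linarith
        have H := AT.main c b a hd' hC2 hB2 hA2
          (by rw [dist_comm c a, dist_comm c b]; exact h2)
          (by rw [dist_comm c b, dist_comm b a]; exact h3)
        rw [sCBA] at H
        exact H
      · have hd' : 0 < AT.det2 (c - b) (a - b) := by rw [dBCA]; linarith
        have H := AT.main b c a hd' hB2 hC2 hA
          (by rw [dist_comm b a]; exact h3)
          (by rw [dist_comm c a]; exact h2)
        rw [sBCA] at H
        exact H
end

section
/- Let K be a convex body in Euclidean n-space ℝⁿ with K ⊆ closedBall(0,1). Then R(K) = 1 if and only if there exist k with 2 ≤ k ≤ n+1 and points p¹, …, p^k ∈ K with ‖pⁱ‖ = 1 for all i and 0 ∈ conv{p¹, …, p^k}. -/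
open Metric Set
open scoped RealInnerProductSpace

section Aux

variable {n : ℕ}

local notation "E" => EuclideanSpace ℝ (Fin n)

/-- Convex hull of a compact set in Euclidean space is compact. -/
lemma myIsCompact_convexHull {S : Set (EuclideanSpace ℝ (Fin n))} (hS : IsCompact S) :
    IsCompact (convexHull ℝ S) := by
  rcases S.eq_empty_or_nonempty with rfl | ⟨s₀, hs₀⟩
  · simpa [convexHull_empty] using isCompact_empty
  set d := n + 1 with hd
  let φ : (Fin d → ℝ) × (Fin d → E) → E := fun p => ∑ i, p.1 i • p.2 i
  have hφ : Continuous φ := by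
    apply continuous_finset_sum
    intro i _
    exact ((continuous_apply i).comp continuous_fst).smul
      ((continuous_apply i).comp continuous_snd)
  have himg : convexHull ℝ S = φ '' ((stdSimplex ℝ (Fin d)) ×ˢ (Set.univ.pi fun _ => S)) := by
    apply Subset.antisymm
    · intro x hx
      rw [convexHull_eq_union] at hx
      simp only [Set.mem_iUnion] at hx
      obtain ⟨t, hts, hai, hx⟩ := hx
      have hcard : t.card ≤ d := by
        have h1 := hai.card_le_finrank_succ
        have h2 : Module.finrank ℝ (vectorSpan ℝ (Set.range ((↑) : t → E))) ≤ n := by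
          refine le_trans (Submodule.finrank_le _) ?_
          rw [finrank_euclideanSpace_fin]
        simp only [Fintype.card_coe] at h1
        omega
      rw [Finset.convexHull_eq] at hx
      obtain ⟨w, hw0, hw1, hwx⟩ := hx
      rw [Finset.centerMass_eq_of_sum_1 _ _ hw1] at hwx
      have e := t.equivFin
      let g : Fin t.card → E := fun j => (e.symm j : E)
      have hgmem : ∀ j, g j ∈ t := fun j => (e.symm j).2
      let F : ℕ → ℝ := fun m => if h : m < t.card then w (g ⟨m, h⟩) else 0
      let G : ℕ → E := fun m => if h : m < t.card then g ⟨m, h⟩ else s₀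
      refine ⟨(fun i : Fin d => F i, fun i : Fin d => G i), ⟨⟨?_, ?_⟩, ?_⟩, ?_⟩
      · intro i
        by_cases h : (i : ℕ) < t.card
        · simpa [F, h] using hw0 _ (hgmem ⟨i, h⟩)
        · simp [F, h]
      · -- sum of weights is 1
        have key : ∀ m ∈ Finset.range d, F m = F m := fun _ _ => rfl
        rw [Fin.sum_univ_eq_sum_range F d]
        rw [← Finset.sum_subset (Finset.range_subset_range.2 hcard)
          (fun m _ hm => by simp [F, Finset.mem_range.not.1 hm])]
        rw [← Fin.sum_univ_eq_sum_range F t.card]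
        have : ∀ j : Fin t.card, F j = w (g j) := by
          intro j; simp [F, j.isLt]
        rw [Finset.sum_congr rfl (fun j _ => this j)]
        calc ∑ j : Fin t.card, w (g j) = ∑ a : ↥t, w (a : E) :=
              Equiv.sum_comp e.symm (fun a : ↥t => w (a : E))
          _ = ∑ y ∈ t, w y := Finset.sum_coe_sort t w
          _ = 1 := hw1
      · intro i _
        by_cases h : (i : ℕ) < t.card
        · exact hts (by simpa [G, h] using hgmem ⟨i, h⟩)
        · simpa [G, h] using hs₀
      · -- φ value is x
        show ∑ i : Fin d, F i • G i = x
        have hFG : ∀ i : Fin d, F i • G i = (fun m => if h : m < t.card then w (g ⟨m, h⟩) • g ⟨m, h⟩ else 0) (i : ℕ) := by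
          intro i
          by_cases h : (i : ℕ) < t.card <;> simp [F, G, h]
        rw [Finset.sum_congr rfl (fun i _ => hFG i)]
        set H : ℕ → E := fun m => if h : m < t.card then w (g ⟨m, h⟩) • g ⟨m, h⟩ else 0 with hH
        rw [Fin.sum_univ_eq_sum_range H d]
        rw [← Finset.sum_subset (Finset.range_subset_range.2 hcard)
          (fun m _ hm => by simp [H, Finset.mem_range.not.1 hm])]
        rw [← Fin.sum_univ_eq_sum_range H t.card]
        have : ∀ j : Fin t.card, H j = w (g j) • g j := by
          intro j; simp [H, j.isLt]
        rw [Finset.sum_congr rfl (fun j _ => this j)]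
        calc ∑ j : Fin t.card, w (g j) • g j = ∑ a : ↥t, w (a : E) • (a : E) :=
              Equiv.sum_comp e.symm (fun a : ↥t => w (a : E) • (a : E))
          _ = ∑ y ∈ t, w y • y := Finset.sum_coe_sort t (fun y => w y • y)
          _ = x := by simpa [id] using hwx
    · rintro x ⟨⟨w, z⟩, ⟨hw, hz⟩, rfl⟩
      exact (convex_convexHull ℝ S).sum_mem (fun i _ => hw.1 i) hw.2
        (fun i _ => subset_convexHull ℝ S (hz i (Set.mem_univ i)))
  rw [himg]
  exact (((isCompact_stdSimplex (𝕜 := ℝ) (ι := Fin d)).prod (isCompact_univ_pi fun _ => hS)).image hφ)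

lemma circ_le {K : Set (EuclideanSpace ℝ (Fin n))} {ρ : ℝ} {c : EuclideanSpace ℝ (Fin n)}
    (h0 : 0 ≤ ρ) (h : K ⊆ Metric.closedBall c ρ) :
    sInf {ρ : ℝ | 0 ≤ ρ ∧ ∃ c, K ⊆ Metric.closedBall c ρ} ≤ ρ :=
  csInf_le ⟨0, fun _ hx => hx.1⟩ ⟨h0, c, h⟩

/-- bound on norm for compact subsets of the closed unit ball avoiding the unit sphere -/
lemma exists_norm_bound {A : Set (EuclideanSpace ℝ (Fin n))} (hA : IsCompact A)
    (hA1 : A ⊆ Metric.closedBall 0 1) (hAs : ∀ x ∈ A, ‖x‖ ≠ 1) :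
    ∃ r, 0 ≤ r ∧ r < 1 ∧ ∀ x ∈ A, ‖x‖ ≤ r := by
  rcases A.eq_empty_or_nonempty with rfl | hne
  · exact ⟨0, le_refl 0, zero_lt_one, by simp⟩
  obtain ⟨x₀, hx₀A, hm⟩ := hA.exists_isMaxOn hne continuous_norm.continuousOn
  have h1 : ‖x₀‖ ≤ 1 := by simpa [mem_closedBall_zero_iff] using hA1 hx₀A
  exact ⟨‖x₀‖, norm_nonneg _, lt_of_le_of_ne h1 (hAs x₀ hx₀A), hm⟩

set_option maxHeartbeats 1000000 in
/-- Forward key step: if the circumradius is 1 then 0 is in the hull of the sphere points. -/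
lemma zero_mem_hull {K : Set (EuclideanSpace ℝ (Fin n))}
    (hne : K.Nonempty) (hcp : IsCompact K)
    (hsub : K ⊆ Metric.closedBall 0 1)
    (h : sInf {ρ : ℝ | 0 ≤ ρ ∧ ∃ c, K ⊆ Metric.closedBall c ρ} = 1) :
    (0 : EuclideanSpace ℝ (Fin n)) ∈ convexHull ℝ (K ∩ Metric.sphere 0 1) := by
  set S := K ∩ Metric.sphere 0 1 with hSdef
  by_contra h0
  rcases S.eq_empty_or_nonempty with hSe | hSne
  · -- no sphere points: K itself is bounded away from the sphere
    obtain ⟨r, hr0, hr1, hrK⟩ := exists_norm_bound hcp hsub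
      (fun x hx hx1 => by
        have : x ∈ S := ⟨hx, by simpa [mem_sphere_zero_iff_norm] using hx1⟩
        simp [hSe] at this)
    have hK : K ⊆ Metric.closedBall (0 : EuclideanSpace ℝ (Fin n)) r := by
      intro x hx
      rw [Metric.mem_closedBall, dist_zero_right]
      exact hrK x hx
    have : sInf {ρ : ℝ | 0 ≤ ρ ∧ ∃ c, K ⊆ Metric.closedBall c ρ} ≤ r := circ_le hr0 hK
    rw [h] at this
    linarith
  · have hScp : IsCompact S := hcp.inter_right Metric.isClosed_sphere
    have hCcp : IsCompact (convexHull ℝ S) := myIsCompact_convexHull hScp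
    obtain ⟨f, u, hfu, hub⟩ := geometric_hahn_banach_point_closed
      (convex_convexHull ℝ S) hCcp.isClosed h0
    have hu : 0 < u := by simpa using hfu
    set v := (InnerProductSpace.toDual ℝ (EuclideanSpace ℝ (Fin n))).symm f with hvdef
    have hv : ∀ x, ⟪v, x⟫ = f x := fun x => InnerProductSpace.toDual_symm_apply
    -- the part of K with small f-value stays away from the sphere
    set A := K ∩ f ⁻¹' (Iic u) with hAdef
    have hAcp : IsCompact A := hcp.inter_right (isClosed_Iic.preimage f.continuous)
    obtain ⟨r, hr0, hr1, hrA⟩ := exists_norm_bound hAcp (fun x hx => hsub hx.1)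
      (fun x hx hx1 => by
        have hxS : x ∈ S := ⟨hx.1, by simpa [mem_sphere_zero_iff_norm] using hx1⟩
        have := hub x (subset_convexHull ℝ S hxS)
        have := hx.2
        simp only [Set.mem_preimage, Set.mem_Iic] at this
        linarith)
    obtain ⟨y₀, hy₀⟩ := hSne
    have hvne : v ≠ 0 := by
      intro hv0
      have := hub y₀ (subset_convexHull ℝ S hy₀)
      have h2 := hv y₀
      rw [hv0] at h2
      simp at h2
      linarith
    set V := ‖v‖ with hVdef
    have hV : 0 < V := norm_pos_iff.2 hvne
    set ε := min (u / V ^ 2) ((1 - r ^ 2) / (2 * V + V ^ 2 + 1)) with hεdef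
    have hε : 0 < ε := by
      apply lt_min
      · positivity
      · apply div_pos (by nlinarith) (by positivity)
    have hε1 : ε ≤ 1 := by
      have h2 : (1 - r ^ 2) / (2 * V + V ^ 2 + 1) ≤ 1 := by
        rw [div_le_one (by positivity)]
        nlinarith
      exact le_trans (min_le_right _ _) h2
    have hεa : ε * V ^ 2 ≤ u := by
      have := min_le_left (u / V ^ 2) ((1 - r ^ 2) / (2 * V + V ^ 2 + 1))
      rw [← hεdef] at this
      rw [← le_div_iff₀ (by positivity : (0:ℝ) < V ^ 2)]
      exact this
    have hεb : ε * (2 * V + V ^ 2 + 1) ≤ 1 - r ^ 2 := by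
      have := min_le_right (u / V ^ 2) ((1 - r ^ 2) / (2 * V + V ^ 2 + 1))
      rw [← hεdef] at this
      rw [← le_div_iff₀ (by positivity : (0:ℝ) < 2 * V + V ^ 2 + 1)]
      exact this
    set M := max (1 - ε * u) (r ^ 2 + ε * (2 * V + V ^ 2)) with hMdef
    have hM1 : M < 1 := by
      apply max_lt
      · nlinarith
      · nlinarith
    set ρ := Real.sqrt M with hρdef
    have hρ0 : 0 ≤ ρ := Real.sqrt_nonneg M
    have hρ1 : ρ < 1 := by
      rw [hρdef, show (1:ℝ) = Real.sqrt 1 by simp]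
      refine Real.sqrt_lt_sqrt (le_max_of_le_right ?_) hM1
      nlinarith
    have hsub' : K ⊆ Metric.closedBall (ε • v) ρ := by
      intro x hx
      rw [mem_closedBall, dist_eq_norm]
      have hx1 : ‖x‖ ≤ 1 := by simpa [mem_closedBall_zero_iff] using hsub hx
      have hexp : ‖x - ε • v‖ ^ 2 = ‖x‖ ^ 2 - 2 * (ε * f x) + ε ^ 2 * V ^ 2 := by
        rw [norm_sub_sq_real, real_inner_smul_right, norm_smul]
        rw [show ⟪x, v⟫ = f x by rw [real_inner_comm]; exact hv x]
        rw [Real.norm_eq_abs, abs_of_pos hε]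
        ring
      have hle : ‖x - ε • v‖ ^ 2 ≤ M := by
        by_cases hcase : u ≤ f x
        · refine le_trans ?_ (le_max_left _ _)
          rw [hexp]
          have e1 : ε * u ≤ ε * f x := mul_le_mul_of_nonneg_left hcase hε.le
          have e2 : ε * (ε * V ^ 2) ≤ ε * u := mul_le_mul_of_nonneg_left hεa hε.le
          have e3 : ‖x‖ ^ 2 ≤ 1 := by nlinarith [norm_nonneg x]
          nlinarith
        · have hxA : x ∈ A := ⟨hx, by simp [Set.mem_preimage, le_of_not_ge hcase]⟩
          have hxr : ‖x‖ ≤ r := hrA x hxA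
          have hfx : |f x| ≤ V := by
            calc |f x| = |⟪v, x⟫| := by rw [hv x]
              _ ≤ ‖v‖ * ‖x‖ := abs_real_inner_le_norm v x
              _ ≤ V * 1 := by apply mul_le_mul_of_nonneg_left hx1 (norm_nonneg v)
              _ = V := mul_one V
          refine le_trans ?_ (le_max_right _ _)
          rw [hexp]
          have h1 : -(f x) ≤ V := by
            have := (abs_le.1 hfx).1
            linarith
          have e1 : ‖x‖ ^ 2 ≤ r ^ 2 := by nlinarith [norm_nonneg x]
          have e2 : ε * (-f x) ≤ ε * V := mul_le_mul_of_nonneg_left h1 hε.le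
          have e3 : ε * (ε * V ^ 2) ≤ 1 * (ε * V ^ 2) :=
            mul_le_mul_of_nonneg_right hε1 (by positivity)
          nlinarith
      calc ‖x - ε • v‖ = Real.sqrt (‖x - ε • v‖ ^ 2) := by
            rw [Real.sqrt_sq (norm_nonneg _)]
        _ ≤ ρ := Real.sqrt_le_sqrt hle
    have : sInf {ρ : ℝ | 0 ≤ ρ ∧ ∃ c, K ⊆ Metric.closedBall c ρ} ≤ ρ := circ_le hρ0 hsub'
    rw [h] at this
    linarith

end Aux

theorem circumradius_eq_one_iff (n : ℕ) (K : Set (EuclideanSpace ℝ (Fin n)))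
    (hne : K.Nonempty) (hcp : IsCompact K) (hcv : Convex ℝ K)
    (hsub : K ⊆ Metric.closedBall 0 1) :
    circumradius K = 1 ↔
      ∃ (k : ℕ) (p : Fin k → EuclideanSpace ℝ (Fin n)),
        2 ≤ k ∧ k ≤ n + 1 ∧ (∀ i, p i ∈ K) ∧ (∀ i, ‖p i‖ = 1) ∧
        (0 : EuclideanSpace ℝ (Fin n)) ∈ convexHull ℝ (Set.range p) := by
  unfold circumradius
  constructor
  · intro h
    have hm := zero_mem_hull hne hcp hsub h
    rw [convexHull_eq_union] at hm
    simp only [Set.mem_iUnion] at hm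
    obtain ⟨t, hts, hai, hm⟩ := hm
    have hcard : t.card ≤ n + 1 := by
      have h1 := hai.card_le_finrank_succ
      have h2 : Module.finrank ℝ
          (vectorSpan ℝ (Set.range ((↑) : t → EuclideanSpace ℝ (Fin n)))) ≤ n := by
        refine le_trans (Submodule.finrank_le _) ?_
        rw [finrank_euclideanSpace_fin]
      simp only [Fintype.card_coe] at h1
      omega
    have htne : t.Nonempty := by
      rcases t.eq_empty_or_nonempty with rfl | h'
      · simp at hm
      · exact h'
    have hk2 : 2 ≤ t.card := by
      by_contra hlt
      push_neg at hlt
      have h1 : 1 ≤ t.card := htne.card_pos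
      have : t.card = 1 := by omega
      obtain ⟨a, ha⟩ := Finset.card_eq_one.1 this
      rw [ha] at hm
      simp only [Finset.coe_singleton, convexHull_singleton, Set.mem_singleton_iff] at hm
      have haS := hts (by simp [ha] : a ∈ (↑t : Set (EuclideanSpace ℝ (Fin n))))
      have : ‖a‖ = 1 := mem_sphere_zero_iff_norm.1 haS.2
      rw [← hm] at this
      simp at this
    refine ⟨t.card, fun i => ((t.equivFin.symm i : EuclideanSpace ℝ (Fin n))), hk2, hcard,
      ?_, ?_, ?_⟩
    · intro i
      exact (hts (t.equivFin.symm i).2).1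
    · intro i
      exact mem_sphere_zero_iff_norm.1 (hts (t.equivFin.symm i).2).2
    · have hr : Set.range (fun i => ((t.equivFin.symm i : EuclideanSpace ℝ (Fin n))))
          = (↑t : Set (EuclideanSpace ℝ (Fin n))) := by
        have h2 := t.equivFin.symm.surjective.range_comp
          ((↑) : {x // x ∈ t} → EuclideanSpace ℝ (Fin n))
        have h3 : (range fun i => ((t.equivFin.symm i : EuclideanSpace ℝ (Fin n))))
            = range (Subtype.val ∘ ⇑t.equivFin.symm) := rfl
        rw [h3, h2, Subtype.range_coe_subtype]
        rfl
      rw [hr]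
      exact hm
  · rintro ⟨k, p, hk2, hkn, hpK, hpn, hmem⟩
    refine le_antisymm (csInf_le ⟨0, fun _ hx => hx.1⟩ ⟨zero_le_one, 0, hsub⟩) ?_
    refine le_csInf ⟨1, zero_le_one, 0, hsub⟩ ?_
    rintro ρ ⟨hρ0, c, hc⟩
    by_contra hlt
    push_neg at hlt
    rw [convexHull_eq] at hmem
    obtain ⟨ι, t, w, z, hw0, hw1, hzs, hcm⟩ := hmem
    rw [Finset.centerMass_eq_of_sum_1 _ _ hw1] at hcm
    have hz1 : ∀ i ∈ t, ‖z i‖ = 1 := by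
      intro i hi
      obtain ⟨j, hj⟩ := hzs i hi
      rw [← hj]
      exact hpn j
    have hzB : ∀ i ∈ t, ‖z i - c‖ ≤ ρ := by
      intro i hi
      obtain ⟨j, hj⟩ := hzs i hi
      have := hc (hj ▸ hpK j)
      rwa [mem_closedBall, dist_eq_norm] at this
    have hinner : ∑ i ∈ t, w i * ⟪z i, c⟫ = 0 := by
      have h1 : ⟪∑ i ∈ t, w i • z i, c⟫ = ∑ i ∈ t, ⟪w i • z i, c⟫ := sum_inner t _ c
      rw [hcm, inner_zero_left] at h1
      simp only [real_inner_smul_left] at h1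
      exact h1.symm
    have key : ∑ i ∈ t, w i * ‖z i - c‖ ^ 2 = 1 + ‖c‖ ^ 2 := by
      have hterm : ∀ i ∈ t, w i * ‖z i - c‖ ^ 2
          = w i * 1 + w i * ‖c‖ ^ 2 - 2 * (w i * ⟪z i, c⟫) := by
        intro i hi
        rw [norm_sub_sq_real, hz1 i hi]
        ring
      rw [Finset.sum_congr rfl hterm, Finset.sum_sub_distrib, Finset.sum_add_distrib]
      have hA : ∑ i ∈ t, w i * 1 = 1 := by
        simp only [mul_one]
        exact hw1
      have hB : ∑ i ∈ t, w i * ‖c‖ ^ 2 = ‖c‖ ^ 2 := by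
        rw [← Finset.sum_mul, hw1, one_mul]
      have hC : ∑ i ∈ t, 2 * (w i * ⟪z i, c⟫) = 0 := by
        rw [← Finset.mul_sum, hinner, mul_zero]
      rw [hA, hB, hC]
      ring
    have hbound : ∑ i ∈ t, w i * ‖z i - c‖ ^ 2 ≤ ρ ^ 2 := by
      calc ∑ i ∈ t, w i * ‖z i - c‖ ^ 2 ≤ ∑ i ∈ t, w i * ρ ^ 2 := by
            refine Finset.sum_le_sum fun i hi => ?_
            refine mul_le_mul_of_nonneg_left ?_ (hw0 i hi)
            nlinarith [norm_nonneg (z i - c), hzB i hi]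
        _ = ρ ^ 2 := by rw [← Finset.sum_mul, hw1, one_mul]
    nlinarith [norm_nonneg c]
end

section
/- Let K be a convex body in Euclidean n-space ℝⁿ, u a unit vector, and α ≤ β real numbers such that K ⊆ { x : α ≤ ⟨u, x⟩ ≤ β }, both hyperplanes meet K (there are points x, y ∈ K with ⟨u, x⟩ = β and ⟨u, y⟩ = α), and β − α = w(K) (the two parallel supporting hyperplanes are at distance equal to the width). Then there exists y ∈ K with ⟨u, y⟩ = α and y + (β − α)·u ∈ K, i.e. the two hyperplanes support a segment with endpoints in K perpendicular to both hyperplanes. -/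
open Metric Set
open scoped RealInnerProductSpace

set_option maxHeartbeats 2000000 in
theorem width_attained_by_perpendicular_segment (n : ℕ)
    (K : Set (EuclideanSpace ℝ (Fin n)))
    (hne : K.Nonempty) (hcp : IsCompact K) (hcv : Convex ℝ K)
    (u : EuclideanSpace ℝ (Fin n)) (hu : ‖u‖ = 1) (α β : ℝ) (hαβ : α ≤ β)
    (hslab : K ⊆ {x | α ≤ (inner ℝ u x : ℝ) ∧ (inner ℝ u x : ℝ) ≤ β})
    (htop : ∃ x ∈ K, (inner ℝ u x : ℝ) = β)
    (hbot : ∃ y ∈ K, (inner ℝ u y : ℝ) = α)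
    (hw : β - α = width K) :
    ∃ y ∈ K, (inner ℝ u y : ℝ) = α ∧ y + (β - α) • u ∈ K := by
  classical
  by_contra hcon
  push_neg at hcon
  set c : EuclideanSpace ℝ (Fin n) := (β - α) • u with hc
  set F : Set (EuclideanSpace ℝ (Fin n)) := K ∩ {x | (inner ℝ u x : ℝ) = α} with hFdef
  set T : Set (EuclideanSpace ℝ (Fin n)) := K ∩ {x | (inner ℝ u x : ℝ) = β} with hTdef
  set G : Set (EuclideanSpace ℝ (Fin n)) := (fun x => -c + x) '' T with hGdef
  have hcontu : Continuous fun x : EuclideanSpace ℝ (Fin n) => (inner ℝ u x : ℝ) :=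
    Continuous.inner continuous_const continuous_id
  have huu : (inner ℝ u u : ℝ) = 1 := by
    rw [real_inner_self_eq_norm_sq, hu]; norm_num
  -- disjointness of the two faces
  have hdisj : Disjoint G F := by
    rw [Set.disjoint_left]
    rintro z ⟨x, ⟨hxK, hxβ⟩, rfl⟩ ⟨hzK, hzα⟩
    exact hcon (-c + x) hzK hzα (by rw [hc]; simpa using hxK)
  -- basic properties of the faces
  have hconvhyp : ∀ r : ℝ, Convex ℝ {x : EuclideanSpace ℝ (Fin n) | (inner ℝ u x : ℝ) = r} := by
    intro r x hx y hy a b ha hb hab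
    simp only [Set.mem_setOf_eq] at *
    rw [inner_add_right, real_inner_smul_right, real_inner_smul_right, hx, hy]
    linear_combination r * hab
  have hclhyp : ∀ r : ℝ, IsClosed {x : EuclideanSpace ℝ (Fin n) | (inner ℝ u x : ℝ) = r} :=
    fun r => isClosed_eq hcontu continuous_const
  have hFcp : IsCompact F := hcp.inter_right (hclhyp α)
  have hTcp : IsCompact T := hcp.inter_right (hclhyp β)
  have hFcv : Convex ℝ F := hcv.inter (hconvhyp α)
  have hTcv : Convex ℝ T := hcv.inter (hconvhyp β)
  have hGcp : IsCompact G := hTcp.image (continuous_const.add continuous_id)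
  have hGcv : Convex ℝ G := hTcv.translate (-c)
  -- separation
  obtain ⟨f, a, b, hfa, hab, hfb⟩ :=
    geometric_hahn_banach_compact_closed hGcv hGcp hFcv hFcp.isClosed hdisj
  set v : EuclideanSpace ℝ (Fin n) := (InnerProductSpace.toDual ℝ (EuclideanSpace ℝ (Fin n))).symm f with hvdef
  have hv : ∀ x : EuclideanSpace ℝ (Fin n), (inner ℝ v x : ℝ) = f x := fun x =>
    InnerProductSpace.toDual_symm_apply
  set v' : EuclideanSpace ℝ (Fin n) := v - (inner ℝ u v : ℝ) • u with hv'def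
  have huv' : (inner ℝ u v' : ℝ) = 0 := by
    rw [hv'def, inner_sub_right, real_inner_smul_right, huu]; ring
  have hv'u : (inner ℝ v' u : ℝ) = 0 := by rw [real_inner_comm]; exact huv'
  have hcontv : Continuous fun x : EuclideanSpace ℝ (Fin n) => (inner ℝ v' x : ℝ) :=
    Continuous.inner continuous_const continuous_id
  set m₁ : ℝ := a - (inner ℝ u v : ℝ) * α with hm₁
  set m₂ : ℝ := b - (inner ℝ u v : ℝ) * α with hm₂
  have hm : m₁ < m₂ := by rw [hm₁, hm₂]; linarith
  have hkey : ∀ x : EuclideanSpace ℝ (Fin n), (inner ℝ u x : ℝ) = α →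
      (inner ℝ v' x : ℝ) = f x - (inner ℝ u v : ℝ) * α := by
    intro x hx
    rw [hv'def, inner_sub_left, real_inner_smul_left, hx, hv]
  clear_value v'
  -- values on the faces
  have hGα : ∀ g ∈ G, (inner ℝ u g : ℝ) = α := by
    rintro g ⟨x, ⟨hxK, hxβ⟩, rfl⟩
    rw [inner_add_right, hc, inner_neg_right, real_inner_smul_right, huu, hxβ]
    ring
  have hGm : ∀ g ∈ G, (inner ℝ v' g : ℝ) < m₁ := by
    intro g hg
    rw [hkey g (hGα g hg), hm₁]
    have := hfa g hg; linarith
  have hTm : ∀ x ∈ T, (inner ℝ v' x : ℝ) < m₁ := by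
    intro x hx
    have h1 : (inner ℝ v' (-c + x) : ℝ) = (inner ℝ v' x : ℝ) := by
      rw [inner_add_right, inner_neg_right, hc, real_inner_smul_right, hv'u]; ring
    have := hGm (-c + x) ⟨x, hx, rfl⟩
    rwa [h1] at this
  have hFm : ∀ p ∈ F, m₂ < (inner ℝ v' p : ℝ) := by
    intro p hp
    rw [hkey p hp.2, hm₂]
    have := hfb p hp; linarith
  clear_value m₁ m₂
  -- bound on the linear functional over K
  obtain ⟨M, hM⟩ : ∃ M : ℝ, ∀ x ∈ K, |(inner ℝ v' x : ℝ)| ≤ M := by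
    obtain ⟨M, hM⟩ := hcp.exists_bound_of_continuousOn hcontv.continuousOn
    exact ⟨M, fun x hx => by simpa [Real.norm_eq_abs] using hM x hx⟩
  have hM0 : 0 ≤ M := by
    obtain ⟨x₀, hx₀⟩ := hne
    exact le_trans (abs_nonneg _) (hM x₀ hx₀)
  -- Claim A : near the top hyperplane, ⟪v',·⟫ ≤ m₁
  have claimA : ∃ ε > 0, ∀ x ∈ K, β - ε ≤ (inner ℝ u x : ℝ) →
      (inner ℝ v' x : ℝ) ≤ m₁ := by
    set C : Set (EuclideanSpace ℝ (Fin n)) := K \ {x | (inner ℝ v' x : ℝ) < m₁} with hCdef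
    have hCcp : IsCompact C := hcp.diff (isOpen_lt hcontv continuous_const)
    rcases C.eq_empty_or_nonempty with hC | hC
    · refine ⟨1, one_pos, fun x hx _ => ?_⟩
      by_contra hxm
      have : x ∈ C := ⟨hx, fun h => hxm h.le⟩
      rw [hC] at this; exact this
    · obtain ⟨x₀, hx₀C, hmax⟩ := hCcp.exists_isMaxOn hC hcontu.continuousOn
      have hx₀β : (inner ℝ u x₀ : ℝ) < β := by
        rcases lt_or_eq_of_le (hslab hx₀C.1).2 with h | h
        · exact h
        · exact absurd (hTm x₀ ⟨hx₀C.1, h⟩) hx₀C.2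
      refine ⟨(β - (inner ℝ u x₀ : ℝ)) / 2, by linarith, fun x hx hxu => ?_⟩
      by_contra hxm
      have hxC : x ∈ C := ⟨hx, fun h => hxm h.le⟩
      have := hmax hxC
      simp only [Set.mem_setOf_eq] at this
      linarith
  -- Claim B : near the bottom hyperplane, ⟪v',·⟫ ≥ m₂
  have claimB : ∃ ε > 0, ∀ x ∈ K, (inner ℝ u x : ℝ) ≤ α + ε →
      m₂ ≤ (inner ℝ v' x : ℝ) := by
    set C : Set (EuclideanSpace ℝ (Fin n)) := K \ {x | m₂ < (inner ℝ v' x : ℝ)} with hCdef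
    have hCcp : IsCompact C := hcp.diff (isOpen_lt continuous_const hcontv)
    rcases C.eq_empty_or_nonempty with hC | hC
    · refine ⟨1, one_pos, fun x hx _ => ?_⟩
      by_contra hxm
      have : x ∈ C := ⟨hx, fun h => hxm h.le⟩
      rw [hC] at this; exact this
    · obtain ⟨x₀, hx₀C, hmin⟩ := hCcp.exists_isMinOn hC hcontu.continuousOn
      have hx₀α : α < (inner ℝ u x₀ : ℝ) := by
        rcases lt_or_eq_of_le (hslab hx₀C.1).1 with h | h
        · exact h
        · exact absurd (hFm x₀ ⟨hx₀C.1, h.symm⟩) hx₀C.2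
      refine ⟨((inner ℝ u x₀ : ℝ) - α) / 2, by linarith, fun x hx hxu => ?_⟩
      by_contra hxm
      have hxC : x ∈ C := ⟨hx, fun h => hxm h.le⟩
      have := hmin hxC
      simp only [Set.mem_setOf_eq] at this
      linarith
  obtain ⟨εA, hεA, hA⟩ := claimA
  obtain ⟨εB, hεB, hB⟩ := claimB
  -- choose a small tilt parameter t
  set D : ℝ := M + |m₁| + |m₂| + 1 with hDdef
  have hD1 : 1 ≤ D := by
    have := abs_nonneg m₁; have := abs_nonneg m₂; rw [hDdef]; linarith
  have hD0 : 0 < D := lt_of_lt_of_le one_pos hD1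
  set t : ℝ := min εA εB / D with htdef
  have ht0 : 0 < t := div_pos (lt_min hεA hεB) hD0
  have ht1 : t * (M - m₁) ≤ εA := by
    have h1 : M - m₁ ≤ D := by
      have := neg_abs_le m₁; have := abs_nonneg m₂; rw [hDdef]; linarith
    calc t * (M - m₁) ≤ t * D := by nlinarith
      _ = min εA εB := by rw [htdef]; field_simp
      _ ≤ εA := min_le_left _ _
  have ht2 : t * (M + m₂) ≤ εB := by
    have h1 : M + m₂ ≤ D := by
      have := le_abs_self m₂; have := abs_nonneg m₁; rw [hDdef]; linarith
    calc t * (M + m₂) ≤ t * D := by nlinarith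
      _ = min εA εB := by rw [htdef]; field_simp
      _ ≤ εB := min_le_right _ _
  clear_value t D
  -- the tilted direction has smaller breadth
  have hub : ∀ x ∈ K, (inner ℝ u x : ℝ) + t * (inner ℝ v' x : ℝ) ≤ β + t * m₁ := by
    intro x hx
    rcases le_or_gt (β - εA) (inner ℝ u x : ℝ) with h | h
    · have h1 := hA x hx h
      have h2 := (hslab hx).2
      nlinarith
    · have h1 := (abs_le.1 (hM x hx)).2
      have h2 : t * (inner ℝ v' x : ℝ) ≤ t * M := by nlinarith
      have h3 : t * M - t * m₁ = t * (M - m₁) := by ring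
      linarith
  have hlb : ∀ x ∈ K, α + t * m₂ ≤ (inner ℝ u x : ℝ) + t * (inner ℝ v' x : ℝ) := by
    intro x hx
    rcases le_or_gt (inner ℝ u x : ℝ) (α + εB) with h | h
    · have h1 := hB x hx h
      have h2 := (hslab hx).1
      nlinarith
    · have h1 := (abs_le.1 (hM x hx)).1
      have h2 : t * (-M) ≤ t * (inner ℝ v' x : ℝ) := by nlinarith
      have h3 : t * m₂ + t * M = t * (M + m₂) := by ring
      linarith
  -- the tilted unit vector
  set N : ℝ := ‖u + t • v'‖ with hNdef
  have hN0 : 0 ≤ N := norm_nonneg _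
  have hN1 : 1 ≤ N := by
    have hsq : N ^ 2 = 1 + ‖t • v'‖ ^ 2 := by
      rw [hNdef, norm_add_sq_real, hu, real_inner_smul_right, huv']
      ring
    nlinarith [sq_nonneg (‖t • v'‖), norm_nonneg (t • v')]
  have hNpos : 0 < N := lt_of_lt_of_le one_pos hN1
  set w : EuclideanSpace ℝ (Fin n) := N⁻¹ • (u + t • v') with hwdef
  have hw1 : ‖w‖ = 1 := by
    rw [hwdef, norm_smul, Real.norm_eq_abs, abs_inv, abs_of_pos hNpos, ← hNdef]
    field_simp
  have hwx : ∀ x : EuclideanSpace ℝ (Fin n), (inner ℝ w x : ℝ)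
      = N⁻¹ * ((inner ℝ u x : ℝ) + t * (inner ℝ v' x : ℝ)) := by
    intro x
    rw [hwdef, real_inner_smul_left, inner_add_left, real_inner_smul_left]
  have hcontw : Continuous fun x : EuclideanSpace ℝ (Fin n) => (inner ℝ w x : ℝ) :=
    Continuous.inner continuous_const continuous_id
  clear_value N w
  -- breadth in direction w
  set S : Set ℝ := {b : ℝ | ∃ u' : EuclideanSpace ℝ (Fin n), ‖u'‖ = 1 ∧
    b = sSup ((fun x => (inner ℝ u' x : ℝ)) '' K) -
      sInf ((fun x => (inner ℝ u' x : ℝ)) '' K)} with hSdef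
  have hSbdd : BddBelow S := by
    refine ⟨0, ?_⟩
    rintro b ⟨u', hu', rfl⟩
    obtain ⟨x₀, hx₀⟩ := hne
    have hcont' : Continuous fun x : EuclideanSpace ℝ (Fin n) => (inner ℝ u' x : ℝ) :=
      Continuous.inner continuous_const continuous_id
    have himg : IsCompact ((fun x => (inner ℝ u' x : ℝ)) '' K) :=
      hcp.image hcont'
    have h1 : sInf ((fun x => (inner ℝ u' x : ℝ)) '' K) ≤ (inner ℝ u' x₀ : ℝ) :=
      csInf_le himg.bddBelow ⟨x₀, hx₀, rfl⟩
    have h2 : (inner ℝ u' x₀ : ℝ) ≤ sSup ((fun x => (inner ℝ u' x : ℝ)) '' K) :=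
      le_csSup himg.bddAbove ⟨x₀, hx₀, rfl⟩
    linarith
  have hwidth_le : width K ≤ sSup ((fun x => (inner ℝ w x : ℝ)) '' K) -
      sInf ((fun x => (inner ℝ w x : ℝ)) '' K) :=
    csInf_le hSbdd ⟨w, hw1, rfl⟩
  have hsup : sSup ((fun x => (inner ℝ w x : ℝ)) '' K) ≤ N⁻¹ * (β + t * m₁) := by
    refine csSup_le (hne.image _) ?_
    rintro y ⟨x, hx, rfl⟩
    show (inner ℝ w x : ℝ) ≤ _
    rw [hwx]
    exact mul_le_mul_of_nonneg_left (hub x hx) (inv_nonneg.2 hN0)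
  have hinf : N⁻¹ * (α + t * m₂) ≤ sInf ((fun x => (inner ℝ w x : ℝ)) '' K) := by
    refine le_csInf (hne.image _) ?_
    rintro y ⟨x, hx, rfl⟩
    show _ ≤ (inner ℝ w x : ℝ)
    rw [hwx]
    exact mul_le_mul_of_nonneg_left (hlb x hx) (inv_nonneg.2 hN0)
  have hbr : width K ≤ N⁻¹ * ((β - α) + t * (m₁ - m₂)) := by
    have : N⁻¹ * (β + t * m₁) - N⁻¹ * (α + t * m₂)
        = N⁻¹ * ((β - α) + t * (m₁ - m₂)) := by ring
    linarith
  have hDlt : (β - α) + t * (m₁ - m₂) < β - α := by nlinarith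
  have hfinal : N⁻¹ * ((β - α) + t * (m₁ - m₂)) < β - α := by
    rcases le_or_gt 0 ((β - α) + t * (m₁ - m₂)) with h | h
    · have hNi : N⁻¹ ≤ 1 := inv_le_one_of_one_le₀ hN1
      nlinarith
    · have : N⁻¹ * ((β - α) + t * (m₁ - m₂)) < 0 :=
        mul_neg_of_pos_of_neg (inv_pos.2 hNpos) h
      linarith
  rw [hw] at hbr
  linarith
end
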